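/- Let ρ be a mirror representation of the blob algebra b_n on (K²)^{⊗2n}, and let w be a loop-free word in the generators {e, 𝒰_1,…,𝒰_{n−1}} of b_n. Then the matrix ρ(w) is mask equivalent to R(f(w)). -/

import Mathlib

namespace TLBlob

/-- The boundary nodes of an `(n,m)` Temperley–Lieb diagram: `Sum.inl i` is the
`i`-th northern node (0-based), `Sum.inr j` the `j`-th southern node (0-based). -/
abbrev TLNode (n m : ℕ) := Sum (Fin n) (Fin m)

/-- Position of a node in the linear order obtained by reading the northern nodes
left to right and then the southern nodes right to left (so that noncrossing
matchings in the rectangle correspond to noncrossing chords). -/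
def nodePos {n m : ℕ} : TLNode n m → ℕ
  | Sum.inl i => (i : ℕ)
  | Sum.inr j => n + m - 1 - (j : ℕ)

/-- An `(n,m)` Temperley–Lieb diagram: a noncrossing perfect matching (fixed-point
free involution) of the `n` northern and `m` southern nodes. -/
structure TLDiagram (n m : ℕ) where
  pair : TLNode n m → TLNode n m
  involutive : Function.Involutive pair
  fixedFree : ∀ v, pair v ≠ v
  noncrossing : ∀ v w, nodePos v < nodePos w → nodePos w < nodePos (pair v) →
    nodePos (pair v) < nodePos (pair w) → False

/-- `[2] = q + q⁻¹` where `q = x²`. -/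
def twoQ {K : Type*} [CommRing K] (x : Kˣ) : K := (x : K) ^ 2 + ((x⁻¹ : Kˣ) : K) ^ 2

/-- The factor `x^{sign(a-b)}(1-δ_{ab})` associated to a cup/cap line, where the
letters `1,2` of the paper are encoded as `0,1 : Fin 2`. -/
def xfac {K : Type*} [CommRing K] (x : Kˣ) (a b : Fin 2) : K :=
  if a = b then 0 else if b < a then (x : K) else ((x⁻¹ : Kˣ) : K)

/-- The matrix `R_q(D)` associated to an `(n,m)` diagram `D`, with rows indexed by
words `v ∈ {1,2}ⁿ` (as functions `Fin n → Fin 2`) and columns by `w ∈ {1,2}ᵐ`. -/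
def Rmat {K : Type*} [CommRing K] (x : Kˣ) {n m : ℕ} (D : TLDiagram n m) :
    Matrix (Fin n → Fin 2) (Fin m → Fin 2) K := fun v w =>
  (∏ p ∈ Finset.univ.filter
      (fun p : Fin n × Fin n => p.1 < p.2 ∧ D.pair (Sum.inl p.1) = Sum.inl p.2),
    xfac x (v p.1) (v p.2)) *
  (∏ p ∈ Finset.univ.filter
      (fun p : Fin n × Fin m => D.pair (Sum.inl p.1) = Sum.inr p.2),
    (if v p.1 = w p.2 then (1 : K) else 0)) *
  (∏ p ∈ Finset.univ.filter
      (fun p : Fin m × Fin m => p.1 < p.2 ∧ D.pair (Sum.inr p.1) = Sum.inr p.2),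
    xfac x (w p.1) (w p.2))

/-- Two matrices are mask equivalent if they have zero entries in the same places. -/
def MaskEquiv {K : Type*} [CommRing K] {α β : Type*} (M N : Matrix α β K) : Prop :=
  ∀ i j, M i j = 0 ↔ N i j = 0

/-- Nodes of the concatenation `D|D'` of an `(n,m)` and an `(m,l)` diagram:
northern, middle, and southern nodes. -/
abbrev TriNode (n m l : ℕ) := Sum (Fin n) (Sum (Fin m) (Fin l))

def inUp {n m l : ℕ} : TLNode n m → TriNode n m l
  | Sum.inl i => Sum.inl i
  | Sum.inr j => Sum.inr (Sum.inl j)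

def inDown {n m l : ℕ} : TLNode m l → TriNode n m l
  | Sum.inl j => Sum.inr (Sum.inl j)
  | Sum.inr k => Sum.inr (Sum.inr k)

def inOut {n m l : ℕ} : TLNode n l → TriNode n m l
  | Sum.inl i => Sum.inl i
  | Sum.inr k => Sum.inr (Sum.inr k)

/-- Two nodes of the concatenation `D|D'` are linked if they are joined by a line
of `D` or of `D'`. -/
def Linked {n m l : ℕ} (D : TLDiagram n m) (D' : TLDiagram m l) :
    TriNode n m l → TriNode n m l → Prop := fun u v =>
  (∃ a, inUp a = u ∧ inUp (D.pair a) = v) ∨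
  (∃ a, inDown a = u ∧ inDown (D'.pair a) = v)

/-- Connectivity in the concatenation `D|D'`. -/
def Joined {n m l : ℕ} (D : TLDiagram n m) (D' : TLDiagram m l) :
    TriNode n m l → TriNode n m l → Prop :=
  Relation.ReflTransGen (Linked D D')

/-- `E` is the composite diagram `D ∘ D'`: outer nodes are paired in `E` exactly
when they are joined through the concatenation `D|D'`. -/
def IsComposite {n m l : ℕ} (D : TLDiagram n m) (D' : TLDiagram m l)
    (E : TLDiagram n l) : Prop :=
  ∀ u v : TLNode n l, E.pair u = v ↔ (u ≠ v ∧ Joined D D' (inOut u) (inOut v))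

/-- Middle nodes of the concatenation. -/
def IsMiddle {n m l : ℕ} : TriNode n m l → Prop
  | Sum.inr (Sum.inl _) => True
  | _ => False

/-- `ζ(D,D')`: the number of closed loops discarded when forming `D ∘ D'`, i.e. the
number of connected components of the concatenation graph consisting entirely of
middle nodes. -/
noncomputable def zeta {n m l : ℕ} (D : TLDiagram n m) (D' : TLDiagram m l) : ℕ :=
  Nat.card {c : Quot (Linked D D') // ∀ v, Quot.mk (Linked D D') v = c → IsMiddle v}

/-- The identity diagram `1 ∈ D(n,n)`. -/
def IsId {n : ℕ} (E : TLDiagram n n) : Prop :=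
  ∀ i : Fin n, E.pair (Sum.inl i) = Sum.inr i

/-- The diagram `𝒰_i ∈ D(n,n)` (with `1 ≤ i ≤ n-1`, nodes numbered `1,…,n`):
it pairs nodes `(i,i+1)` on the top, `(i',(i+1)')` on the bottom, and `(k,k')`
otherwise.  In the 0-based encoding these are positions `i-1` and `i`. -/
def IsU {n : ℕ} (i : ℕ) (E : TLDiagram n n) : Prop :=
  ∃ (_ : 1 ≤ i) (h2 : i < n),
    E.pair (Sum.inl ⟨i - 1, by omega⟩) = Sum.inl ⟨i, h2⟩ ∧
    E.pair (Sum.inr ⟨i - 1, by omega⟩) = Sum.inr ⟨i, h2⟩ ∧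
    ∀ k : Fin n, (k : ℕ) ≠ i - 1 → (k : ℕ) ≠ i → E.pair (Sum.inl k) = Sum.inr k

/-- The column reached after the first `k` steps of a walk encoded as a word in
`{1,2}ⁿ` (letter `1` = `0 : Fin 2` is a step increasing the column index,
letter `2` = `1 : Fin 2` a step decreasing it). -/
def col {n : ℕ} (a : Fin n → Fin 2) (k : ℕ) : ℤ :=
  ∑ j ∈ Finset.univ.filter (fun j : Fin n => (j : ℕ) < k),
    (if a j = 0 then (1 : ℤ) else -1)

/-- A word encodes a walk on the 1-Pascal graph (column indices stay nonnegative). -/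
def IsWalk {n : ℕ} (a : Fin n → Fin 2) : Prop := ∀ k, 0 ≤ col a k

/-- A pair of walks with a common endpoint, i.e. an element of `W²(n)`. -/
def WalkPair {n : ℕ} (a b : Fin n → Fin 2) : Prop :=
  IsWalk a ∧ IsWalk b ∧ col a n = col b n

/-- Vertex `(l,d)` (level `l`, column `d`) lies in the envelope of the pair `(a,b)`:
between the drawing of `b` reflected in the main vertical and the drawing of `a`,
and not strictly inside the triangle cut off by the piecewise straight line from
`(n,i)` to `(n-i,0)` to `(n,-i)`, where `i = col a n`. -/
def vertOK {n : ℕ} (a b : Fin n → Fin 2) (l : ℕ) (d : ℤ) : Prop :=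
  -(col b l) ≤ d ∧ d ≤ col a l ∧
  ((l : ℤ) - ((n : ℤ) - col a n) ≤ d ∨ d ≤ -((l : ℤ) - ((n : ℤ) - col a n)))

/-- The unit diamond tile with top vertex at level `r`, column `c` (so with
vertices `(r,c)`, `(r+1,c∓1)`, `(r+2,c)`) belongs to the tiling of the envelope
of `(a,b)`. -/
def IsTile {n : ℕ} (a b : Fin n → Fin 2) (r : ℕ) (c : ℤ) : Prop :=
  r + 2 ≤ n ∧ (c - (r : ℤ)) % 2 = 0 ∧ vertOK a b r c ∧
  vertOK a b (r + 1) (c - 1) ∧ vertOK a b (r + 1) (c + 1) ∧ vertOK a b (r + 2) c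

instance {n : ℕ} (a b : Fin n → Fin 2) (r : ℕ) (c : ℤ) : Decidable (IsTile a b r c) := by
  unfold IsTile vertOK; infer_instance

/-- The word `w((a,b))`, as the list of its (1-based) indices: scanning the tiles
of the envelope of `(a,b)` column by column (starting from the side of `a`), top
to bottom within a column, and writing `U_{r+1}` for a tile with top vertex at
level `r` (hence base at row `r+2`). -/
def wordOf {n : ℕ} (a b : Fin n → Fin 2) : List ℕ :=
  (List.range (2 * n + 1)).flatMap fun j =>
    (List.range (n - 1)).filterMap fun r =>
      if IsTile a b r ((n : ℤ) - (j : ℤ)) then some (r + 1) else none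

/-- Extend a word `v ∈ {1,2}ⁿ` by `0` beyond its length (convenience lookup). -/
def ext {n : ℕ} (v : Fin n → Fin 2) (k : ℕ) : Fin 2 :=
  if h : k < n then v ⟨k, h⟩ else 0

/-- The matrix `R(U_i) = R_q(𝒰_i)` acting on `(K²)^{⊗n}`, where `U_i` couples the
(1-based) tensor factors `i` and `i+1`. -/
def RU {K : Type*} [CommRing K] (x : Kˣ) (n i : ℕ) :
    Matrix (Fin n → Fin 2) (Fin n → Fin 2) K := fun v w =>
  (∏ k ∈ Finset.univ.filter (fun k : Fin n => (k : ℕ) + 1 ≠ i ∧ (k : ℕ) ≠ i),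
    (if v k = w k then (1 : K) else 0)) *
  xfac x (ext v (i - 1)) (ext v i) * xfac x (ext w (i - 1)) (ext w i)

/-- `R` of a word in the `U_i`: the corresponding product of matrices. -/
def Rword {K : Type*} [CommRing K] (x : Kˣ) (n : ℕ) (L : List ℕ) :
    Matrix (Fin n → Fin 2) (Fin n → Fin 2) K :=
  (L.map (RU x n)).prod

/-- A blob diagram: an `(n,n)` Temperley–Lieb diagram together with a set of
decorated (blobbed) lines, each of which must be exposable to the western edge
(i.e. not enclosed by any other line). -/
structure BlobDiagram (n : ℕ) extends TLDiagram n n where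
  deco : TLNode n n → Bool
  deco_pair : ∀ v, deco (toTLDiagram.pair v) = deco v
  deco_exposed : ∀ v, deco v = true → ∀ c,
    ¬(nodePos c < nodePos v ∧ nodePos v < nodePos (toTLDiagram.pair c))

/-- The identity blob diagram (no decorations). -/
def IsIdB {n : ℕ} (E : BlobDiagram n) : Prop :=
  IsId E.toTLDiagram ∧ ∀ v, E.deco v = false

/-- The generator `e`: identity pairing with a blob on the line `(1,1')`. -/
def IsEB {n : ℕ} (E : BlobDiagram n) : Prop :=
  IsId E.toTLDiagram ∧ ∃ h : 0 < n, ∀ v,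
    (E.deco v = true ↔ (v = Sum.inl (⟨0, h⟩ : Fin n) ∨ v = Sum.inr (⟨0, h⟩ : Fin n)))

/-- The (undecorated) generator `𝒰_i` viewed as a blob diagram. -/
def IsUB {n : ℕ} (i : ℕ) (E : BlobDiagram n) : Prop :=
  IsU i E.toTLDiagram ∧ ∀ v, E.deco v = false

/-- A node of the concatenation `D|D'` lies on a decorated line segment. -/
def DecoratedAt {n : ℕ} (D D' : BlobDiagram n) (u : TriNode n n n) : Prop :=
  (∃ a, inUp a = u ∧ D.deco a = true) ∨ (∃ a, inDown a = u ∧ D'.deco a = true)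

/-- `E` is the blob-diagram composite of `D` and `D'`: the underlying diagrams
compose, and a line of `E` is decorated exactly when one of its constituent
segments is. -/
def IsBlobComposite {n : ℕ} (D D' E : BlobDiagram n) : Prop :=
  IsComposite D.toTLDiagram D'.toTLDiagram E.toTLDiagram ∧
  ∀ u : TLNode n n, (E.deco u = true ↔
    ∃ w, Joined D.toTLDiagram D'.toTLDiagram (inOut u) w ∧ DecoratedAt D D' w)

/-- Number of closed loops carrying no blob in the concatenation `D|D'`. -/
noncomputable def zetaPlain {n : ℕ} (D D' : BlobDiagram n) : ℕ :=
  Nat.card {c : Quot (Linked D.toTLDiagram D'.toTLDiagram) //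
    (∀ v, Quot.mk _ v = c → IsMiddle v) ∧ (∀ v, Quot.mk _ v = c → ¬DecoratedAt D D' v)}

/-- Number of closed loops carrying at least one blob in the concatenation `D|D'`. -/
noncomputable def zetaBlob {n : ℕ} (D D' : BlobDiagram n) : ℕ :=
  Nat.card {c : Quot (Linked D.toTLDiagram D'.toTLDiagram) //
    (∀ v, Quot.mk _ v = c → IsMiddle v) ∧ ∃ v, Quot.mk _ v = c ∧ DecoratedAt D D' v}

/-- Number of decorated lines of a blob diagram. -/
def decoLines {n : ℕ} (B : BlobDiagram n) : ℕ :=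
  (Finset.univ.filter (fun v : TLNode n n =>
    B.deco v = true ∧ nodePos v < nodePos (B.toTLDiagram.pair v))).card

/-- Number of connected components of the concatenation `D|D'` carrying at least
one blob. -/
noncomputable def blobbedComps {n : ℕ} (D D' : BlobDiagram n) : ℕ :=
  Nat.card {c : Quot (Linked D.toTLDiagram D'.toTLDiagram) //
    ∃ v, Quot.mk _ v = c ∧ DecoratedAt D D' v}

/-- The exponent of `δ_e` arising in the composition `D · D'`: each component
carrying `k ≥ 1` blobs contributes `k - 1` blob merges. -/
noncomputable def deltaExp {n : ℕ} (D D' : BlobDiagram n) : ℕ :=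
  decoLines D + decoLines D' - blobbedComps D D'

/-- The scalar factor arising in blob diagram composition: `[2]` for each plain
loop, `γ` for each blobbed loop, and `δ_e` for each blob merge. -/
noncomputable def BlobFactor {K : Type*} [CommRing K] (x : Kˣ) (γ δe : K) {n : ℕ}
    (D D' : BlobDiagram n) : K :=
  twoQ x ^ zetaPlain D D' * γ ^ zetaBlob D D' * δe ^ deltaExp D D'

/-- `ρ` is (the restriction to the diagram basis of) a representation of the blob
algebra `b_n` with parameters `q = x²`, `γ`, `δ_e` on `(K²)^{⊗2n}`. -/
def IsBlobRep {K : Type*} [CommRing K] (x : Kˣ) (γ δe : K) {n : ℕ}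
    (ρ : BlobDiagram n → Matrix (Fin (2 * n) → Fin 2) (Fin (2 * n) → Fin 2) K) : Prop :=
  (∀ E, IsIdB E → ρ E = 1) ∧
  ∀ D D' E, IsBlobComposite D D' E → ρ D * ρ D' = BlobFactor x γ δe D D' • ρ E

/-- `ρ` is a mirror representation: for some invertible `r,s,t`, `ρ(e)` is mask
equivalent to `R_r(U_0)` and each `ρ(𝒰_i) = X_i Y_i` with `X_i ∈ [R_s(U_{-i})]`,
`Y_i ∈ [R_t(U_i)]` (the shifted generator `U_j` of `T_{2n}` acting on the 1-based
tensor factors `n+j`, `n+j+1`). -/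
def IsMirror {K : Type*} [CommRing K] {n : ℕ}
    (ρ : BlobDiagram n → Matrix (Fin (2 * n) → Fin 2) (Fin (2 * n) → Fin 2) K) : Prop :=
  ∃ r s t : Kˣ,
    (∀ E, IsEB E → MaskEquiv (ρ E) (RU r (2 * n) n)) ∧
    ∀ i : ℕ, 1 ≤ i → i + 1 ≤ n → ∃ X Y,
      (∀ U, IsUB i U → ρ U = X * Y) ∧
      MaskEquiv X (RU s (2 * n) (n - i)) ∧ MaskEquiv Y (RU t (2 * n) (n + i))

/-- `gs` is a list of generator diagrams spelling the word `w` in the generators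
of `b_n` (letter `0` stands for `e`, letter `i ≥ 1` for `𝒰_i`). -/
def MatchesWord {n : ℕ} (w : List ℕ) (gs : List (BlobDiagram n)) : Prop :=
  List.Forall₂ (fun g d => (g = 0 ∧ IsEB d) ∨ (1 ≤ g ∧ IsUB g d)) w gs

/-- The map `f` on words, letterwise `f(e) = U_0` and `f(𝒰_i) = U_{-i}U_i`, with
the shifted generator `U_j` of `T_{2n}` recorded by its unshifted 1-based index
`n + j`. -/
def fword (n : ℕ) (w : List ℕ) : List ℕ :=
  w.flatMap fun g => if g = 0 then [n] else [n - g, n + g]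

/-- Loop-free evaluation of a word in the generators of `b_n` to a single blob
diagram (no closed loops and no blob merges arise, so the value in `b_n` is the
diagram itself with coefficient 1). -/
inductive EvalBlob {n : ℕ} : List ℕ → BlobDiagram n → Prop
  | nil : ∀ E, IsIdB E → EvalBlob [] E
  | consE : ∀ (L : List ℕ) (B D E : BlobDiagram n), EvalBlob L D → IsEB B →
      IsBlobComposite B D E → zetaPlain B D = 0 → zetaBlob B D = 0 →
      deltaExp B D = 0 → EvalBlob (0 :: L) E
  | consU : ∀ (i : ℕ) (L : List ℕ) (U D E : BlobDiagram n), EvalBlob L D → 1 ≤ i →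
      IsUB i U → IsBlobComposite U D E → zetaPlain U D = 0 → zetaBlob U D = 0 →
      deltaExp U D = 0 → EvalBlob (i :: L) E

/-! ### Auxiliary development for Statement 14 -/

section St14Aux

open Function Relation

/-! #### Fin 2 helpers -/

private lemma f2a : ∀ a b : Fin 2, (a ≠ b + 1) ↔ a = b := by decide
private lemma f2b : ∀ a b : Fin 2, (a + 1 ≠ b + 1) ↔ a ≠ b := by decide
private lemma f2c : ∀ a b : Fin 2, (a + 1 ≠ b) ↔ a = b := by decide
private lemma f2d : ∀ a b : Fin 2, a = b + 1 → a ≠ b := by decide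
private lemma f2e : ∀ a : Fin 2, a ≠ a + 1 := by decide
private lemma f2f : ∀ a : Fin 2, a + 1 ≠ a := by decide

/-! #### Support of a pairing -/

/-- The letter at a node, shifted on northern nodes so that all line constraints
become "letters differ". -/
def lam {m : ℕ} (v w : Fin m → Fin 2) : TLNode m m → Fin 2
  | .inl k => v k + 1
  | .inr k => w k

@[simp] lemma lam_inl {m : ℕ} (v w : Fin m → Fin 2) (k : Fin m) :
    lam v w (.inl k) = v k + 1 := rfl

@[simp] lemma lam_inr {m : ℕ} (v w : Fin m → Fin 2) (k : Fin m) :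
    lam v w (.inr k) = w k := rfl

/-- The support predicate of a pairing. -/
def SuppP {m : ℕ} (π : TLNode m m → TLNode m m) (v w : Fin m → Fin 2) : Prop :=
  ∀ c, lam v w (π c) ≠ lam v w c

/-- `M` has the mask determined by the pairing `π`. -/
def MaskIs {K : Type*} [CommRing K] {m : ℕ}
    (M : Matrix (Fin m → Fin 2) (Fin m → Fin 2) K)
    (π : TLNode m m → TLNode m m) : Prop :=
  ∀ v w, M v w = 0 ↔ ¬ SuppP π v w

lemma maskEquiv_of_maskIs {K : Type*} [CommRing K] {m : ℕ}
    {M N : Matrix (Fin m → Fin 2) (Fin m → Fin 2) K} {π}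
    (hM : MaskIs M π) (hN : MaskIs N π) : MaskEquiv M N :=
  fun v w => (hM v w).trans (hN v w).symm

lemma maskIs_of_maskEquiv {K : Type*} [CommRing K] {m : ℕ}
    {M N : Matrix (Fin m → Fin 2) (Fin m → Fin 2) K} {π}
    (h : MaskEquiv M N) (hN : MaskIs N π) : MaskIs M π :=
  fun v w => (h v w).trans (hN v w)

/-! #### The generator pairing -/

/-- The pairing of the diagram `𝒰_j` (cap `p~q` on top and bottom, vertical else). -/
def genP {m : ℕ} (p q : Fin m) : TLNode m m → TLNode m m
  | .inl k => if k = p then .inl q else if k = q then .inl p else .inr k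
  | .inr k => if k = p then .inr q else if k = q then .inr p else .inl k

lemma suppP_genP {m : ℕ} {p q : Fin m} (hpq : p ≠ q) (v w : Fin m → Fin 2) :
    SuppP (genP p q) v w ↔
      v p ≠ v q ∧ w p ≠ w q ∧ ∀ k, k ≠ p → k ≠ q → v k = w k := by
  constructor
  · intro h
    refine ⟨?_, ?_, ?_⟩
    · have := h (.inl p)
      simp only [genP, if_pos] at this
      exact fun e => this (by simp [lam, e])
    · have := h (.inr p)
      simp only [genP, if_pos] at this
      exact fun e => this (by simp [lam, e])
    · intro k h1 h2
      have := h (.inl k)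
      simp only [genP, if_neg h1, if_neg h2, lam_inl, lam_inr] at this
      exact ((f2a _ _).mp this).symm
  · rintro ⟨h1, h2, h3⟩ c
    cases c with
    | inl k =>
      rcases eq_or_ne k p with rfl | hkp
      · simp only [genP, if_pos rfl, lam_inl]
        exact (f2b _ _).mpr (fun e => h1 e.symm)
      rcases eq_or_ne k q with rfl | hkq
      · simp only [genP, if_neg hpq.symm, if_pos rfl, lam_inl]
        exact (f2b _ _).mpr h1
      · simp only [genP, if_neg hkp, if_neg hkq, lam_inl, lam_inr]
        exact fun e => f2d _ _ e (h3 k hkp hkq).symm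
    | inr k =>
      rcases eq_or_ne k p with rfl | hkp
      · simp only [genP, if_pos rfl, lam_inr]
        exact fun e => h2 e.symm
      rcases eq_or_ne k q with rfl | hkq
      · simp only [genP, if_neg hpq.symm, if_pos rfl, lam_inr]
        exact h2
      · simp only [genP, if_neg hkp, if_neg hkq, lam_inl, lam_inr]
        exact fun e => f2d _ _ e.symm (h3 k hkp hkq).symm

/-! #### Mask of the matrix `RU` -/

lemma xfac_eq_zero_iff {K : Type*} [CommRing K] [IsDomain K] (x : Kˣ) (a b : Fin 2) :
    xfac x a b = 0 ↔ a = b := by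
  unfold xfac
  split_ifs with h1 h2
  · simp [h1]
  · simpa [h1] using x.ne_zero
  · simpa [h1] using x⁻¹.ne_zero

lemma maskIs_RU {K : Type*} [CommRing K] [IsDomain K] (x : Kˣ) {m j : ℕ}
    (h1 : 1 ≤ j) (h2 : j < m) :
    MaskIs (RU x m j) (genP ⟨j - 1, by omega⟩ ⟨j, h2⟩) := by
  intro v w
  set p : Fin m := ⟨j - 1, by omega⟩
  set q : Fin m := ⟨j, h2⟩
  have hpq : p ≠ q := by simp only [p, q, ne_eq, Fin.mk.injEq]; omega
  have hev : ext v (j - 1) = v p := by unfold ext; rw [dif_pos (by omega)]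
  have hev2 : ext v j = v q := by unfold ext; rw [dif_pos h2]
  have hew : ext w (j - 1) = w p := by unfold ext; rw [dif_pos (by omega)]
  have hew2 : ext w j = w q := by unfold ext; rw [dif_pos h2]
  rw [suppP_genP hpq]
  unfold RU
  rw [hev, hev2, hew, hew2, mul_eq_zero, mul_eq_zero,
    xfac_eq_zero_iff, xfac_eq_zero_iff, Finset.prod_eq_zero_iff]
  constructor
  · rintro ((⟨k, hk, hk0⟩ | hv) | hw)
    · simp only [Finset.mem_filter, Finset.mem_univ, true_and] at hk
      rw [ite_eq_right_iff] at hk0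
      intro hc
      exact one_ne_zero (hk0 (hc.2.2 k
        (by rw [Fin.ne_iff_vne]; simp only [p]; omega)
        (by rw [Fin.ne_iff_vne]; simp only [q]; omega)))
    · exact fun hc => hc.1 hv
    · exact fun hc => hc.2.1 hw
  · intro hc
    by_cases hv : v p = v q
    · exact Or.inl (Or.inr hv)
    by_cases hw : w p = w q
    · exact Or.inr hw
    left; left
    rw [not_and_or, not_and_or] at hc
    rcases hc with h | h | h
    · exact absurd hv h
    · exact absurd hw h
    · push_neg at h
      obtain ⟨k, hk1, hk2, hk3⟩ := h
      refine ⟨k, ?_, by simp [hk3]⟩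
      simp only [Finset.mem_filter, Finset.mem_univ, true_and]
      rw [Fin.ne_iff_vne] at hk1 hk2
      simp only [p, q] at hk1 hk2
      omega

/-! #### Cap update of a pairing -/

/-- Composing a pairing with a new cap on `p, q`. -/
def capU {α : Type*} [DecidableEq α] (p q : α) (π : α → α) : α → α := fun u =>
  if u = p then q else if u = q then p
  else if π u = p then π q else if π u = q then π p else π u

section capU
variable {α : Type*} [DecidableEq α] {p q : α} {π : α → α}
variable (hinv : Function.Involutive π) (hff : ∀ u, π u ≠ u) (hpq : p ≠ q) (hcap : π p ≠ q)

include hinv hcap in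
lemma capU_qp : π q ≠ p := fun h => hcap (by rw [← h, hinv])

@[simp] lemma capU_p : capU p q π p = q := by simp [capU]

include hpq in
@[simp] lemma capU_q : capU p q π q = p := by simp [capU, hpq.symm]

lemma capU_of_ne {u : α} (h1 : u ≠ p) (h2 : u ≠ q) (h3 : π u ≠ p) (h4 : π u ≠ q) :
    capU p q π u = π u := by simp [capU, h1, h2, h3, h4]

lemma capU_of_eq_p {u : α} (h1 : u ≠ p) (h2 : u ≠ q) (h3 : π u = p) :
    capU p q π u = π q := by simp [capU, h1, h2, h3]

include hinv hpq hcap in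
lemma capU_of_eq_q {u : α} (h2 : u ≠ q) (h3 : π u = q) :
    capU p q π u = π p := by
  have h1 : u ≠ p := fun e => hcap (e ▸ h3)
  unfold capU
  rw [if_neg h1, if_neg h2, if_neg (show ¬π u = p by rw [h3]; exact hpq.symm), if_pos h3]

include hinv hff hpq hcap in
lemma capU_invol : Function.Involutive (capU p q π) := by
  have hqp := capU_qp hinv hcap
  have hπpp := hff p
  have hπqq := hff q
  intro u
  rcases eq_or_ne u p with rfl | h1
  · rw [capU_p, capU_q hpq]
  rcases eq_or_ne u q with rfl | h2
  · rw [capU_q hpq, capU_p]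
  rcases eq_or_ne (π u) p with h3 | h3
  · rw [capU_of_eq_p h1 h2 h3]
    have e1 : π q ≠ p := hqp
    have e2 : π q ≠ q := hff q
    have e3 : π (π q) = q := hinv q
    rw [capU_of_eq_q hinv hpq hcap e2 e3, ← h3, hinv]
  rcases eq_or_ne (π u) q with h4 | h4
  · rw [capU_of_eq_q hinv hpq hcap h2 h4]
    have e1 : π p ≠ p := hff p
    have e2 : π p ≠ q := hcap
    have e3 : π (π p) = p := hinv p
    rw [capU_of_eq_p e1 e2 e3, ← h4, hinv]
  · rw [capU_of_ne h1 h2 h3 h4]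
    have e1 : π u ≠ p := h3
    have e2 : π u ≠ q := h4
    have e3 : π (π u) = u := hinv u
    have e4 : π (π u) ≠ p := by rw [e3]; exact h1
    have e5 : π (π u) ≠ q := by rw [e3]; exact h2
    rw [capU_of_ne e1 e2 (by rw [e3]; exact h1) (by rw [e3]; exact h2), e3]

include hinv hff hpq hcap in
lemma capU_ff : ∀ u, capU p q π u ≠ u := by
  have hqp := capU_qp hinv hcap
  intro u
  rcases eq_or_ne u p with rfl | h1
  · rw [capU_p]; exact hpq.symm
  rcases eq_or_ne u q with rfl | h2
  · rw [capU_q hpq]; exact hpq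
  rcases eq_or_ne (π u) p with h3 | h3
  · rw [capU_of_eq_p h1 h2 h3]
    intro e
    exact hpq (by rw [← h3, ← e, hinv])
  rcases eq_or_ne (π u) q with h4 | h4
  · rw [capU_of_eq_q hinv hpq hcap h2 h4]
    intro e
    exact hpq (by rw [← h4, ← e, hinv])
  · rw [capU_of_ne h1 h2 h3 h4]; exact hff u

end capU

/-! #### The no-cancellation multiplication lemma -/

theorem mask_mul {K : Type*} [CommRing K] [IsDomain K] {m : ℕ}
    (π : TLNode m m → TLNode m m) (hinv : Function.Involutive π) (hff : ∀ u, π u ≠ u)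
    (p q : Fin m) (hpq : p ≠ q) (hcap : π (.inl p) ≠ .inl q)
    (G M : Matrix (Fin m → Fin 2) (Fin m → Fin 2) K)
    (hG : MaskIs G (genP p q)) (hM : MaskIs M π) :
    MaskIs (G * M) (capU (Sum.inl p) (Sum.inl q) π) := by
  intro v w
  set a := π (.inl p) with ha
  set b := π (.inl q) with hb
  have hpq' : (Sum.inl p : TLNode m m) ≠ Sum.inl q := by simp [hpq]
  have hap : a ≠ .inl p := hff _
  have haq : a ≠ .inl q := hcap
  have hbq : b ≠ .inl q := hff _
  have hbp : b ≠ .inl p := capU_qp hinv hcap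
  have hab : a ≠ b := by
    intro h
    have : π a = π b := by rw [h]
    rw [ha, hb, hinv, hinv] at this
    exact hpq' this
  have hπa : π a = .inl p := by rw [ha, hinv]
  have hπb : π b = .inl q := by rw [hb, hinv]
  classical
  set u₀ : Fin m → Fin 2 := fun k => if k = p then lam v w a else if k = q then lam v w b else v k
    with hu₀
  have hu₀p : u₀ p = lam v w a := by simp [hu₀]
  have hu₀q : u₀ q = lam v w b := by simp [hu₀, hpq.symm]
  have hu₀k : ∀ k, k ≠ p → k ≠ q → u₀ k = v k := by intro k h1 h2; simp [hu₀, h1, h2]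
  have agree : ∀ (u : Fin m → Fin 2), (∀ k, k ≠ p → k ≠ q → u k = v k) →
      ∀ c, c ≠ Sum.inl p → c ≠ Sum.inl q → lam u w c = lam v w c := by
    intro u hu c h1 h2
    cases c with
    | inl k =>
      have e1 : k ≠ p := fun e => h1 (by rw [e])
      have e2 : k ≠ q := fun e => h2 (by rw [e])
      simp [lam, hu k e1 e2]
    | inr k => rfl
  have key : (G * M) v w = G v u₀ * M u₀ w := by
    rw [Matrix.mul_apply]
    refine Finset.sum_eq_single u₀ ?_ (fun h => absurd (Finset.mem_univ _) h)
    intro u _ hu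
    rcases eq_or_ne (G v u) 0 with h0 | h0
    · rw [h0, zero_mul]
    · have hs : SuppP (genP p q) v u := by
        by_contra hc; exact h0 ((hG v u).mpr hc)
      obtain ⟨hvpq, hupq, hoff⟩ := (suppP_genP hpq v u).mp hs
      have hMu : M u w = 0 := by
        rw [hM]
        intro hsu
        apply hu
        have hag : ∀ k, k ≠ p → k ≠ q → u k = v k := fun k e1 e2 => (hoff k e1 e2).symm
        funext k
        rcases eq_or_ne k p with rfl | hkp
        · have h1 := hsu (.inl k)
          rw [← ha, lam_inl] at h1
          have h2 : lam u w a = u k := (f2a _ _).mp h1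
          rw [hu₀p, ← agree u hag a hap haq, h2]
        rcases eq_or_ne k q with rfl | hkq
        · have h1 := hsu (.inl k)
          rw [← hb, lam_inl] at h1
          have h2 : lam u w b = u k := (f2a _ _).mp h1
          rw [hu₀q, ← agree u hag b hbp hbq, h2]
        · rw [hu₀k k hkp hkq, hag k hkp hkq]
      rw [hMu, mul_zero]
  rw [key, mul_eq_zero, hG v u₀, hM u₀ w, ← not_and_or]
  apply not_congr
  constructor
  · rintro ⟨h1, h2⟩ c
    obtain ⟨hvpq, hupq, hoff⟩ := (suppP_genP hpq v u₀).mp h1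
    have hag : ∀ k, k ≠ p → k ≠ q → u₀ k = v k := hu₀k
    rcases eq_or_ne c (Sum.inl p) with rfl | hc1
    · rw [capU_p, lam_inl, lam_inl]
      exact (f2b _ _).mpr (fun e => hvpq e.symm)
    rcases eq_or_ne c (Sum.inl q) with rfl | hc2
    · rw [capU_q hpq', lam_inl, lam_inl]
      exact (f2b _ _).mpr hvpq
    rcases eq_or_ne (π c) (Sum.inl p) with hc3 | hc3
    · have hca : c = a := by rw [← hinv c, hc3, ha]
      rw [capU_of_eq_p hc1 hc2 hc3, ← hb, hca]
      rw [hu₀p, hu₀q] at hupq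
      exact fun e => hupq (e.symm)
    rcases eq_or_ne (π c) (Sum.inl q) with hc4 | hc4
    · have hcb : c = b := by rw [← hinv c, hc4, hb]
      rw [capU_of_eq_q hinv hpq' hcap hc2 hc4, ← ha, hcb]
      rw [hu₀p, hu₀q] at hupq
      exact hupq
    · rw [capU_of_ne hc1 hc2 hc3 hc4]
      have := h2 c
      rwa [agree u₀ hag (π c) hc3 hc4, agree u₀ hag c hc1 hc2] at this
  · intro h
    have hs1 : v p ≠ v q := by
      have := h (Sum.inl p)
      rw [capU_p, lam_inl, lam_inl] at this
      exact fun e => (f2b _ _).mp this e.symm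
    have hs2 : lam v w a ≠ lam v w b := by
      have := h a
      rw [capU_of_eq_p hap haq hπa, ← hb] at this
      exact fun e => this e.symm
    refine ⟨(suppP_genP hpq v u₀).mpr ⟨hs1, by rw [hu₀p, hu₀q]; exact hs2,
      fun k e1 e2 => (hu₀k k e1 e2).symm⟩, ?_⟩
    intro c
    rcases eq_or_ne c (Sum.inl p) with rfl | hc1
    · rw [← ha, lam_inl, agree u₀ hu₀k a hap haq, ← hu₀p]
      exact f2e _
    rcases eq_or_ne c (Sum.inl q) with rfl | hc2
    · rw [← hb, lam_inl, agree u₀ hu₀k b hbp hbq, ← hu₀q]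
      exact f2e _
    rcases eq_or_ne (π c) (Sum.inl p) with hc3 | hc3
    · have hca : c = a := by rw [← hinv c, hc3, ha]
      rw [hc3, lam_inl, hca, agree u₀ hu₀k a hap haq, ← hu₀p]
      exact f2f _
    rcases eq_or_ne (π c) (Sum.inl q) with hc4 | hc4
    · have hcb : c = b := by rw [← hinv c, hc4, hb]
      rw [hc4, lam_inl, hcb, agree u₀ hu₀k b hbp hbq, ← hu₀q]
      exact f2f _
    · rw [agree u₀ hu₀k (π c) hc3 hc4, agree u₀ hu₀k c hc1 hc2]
      have := h c
      rwa [capU_of_ne hc1 hc2 hc3 hc4] at this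

/-! #### Folded coordinates on `TLNode (2n) (2n)` -/

variable {n : ℕ}

/-- Index of the lift of a blob index to the doubled strip: `true` is the right
(original) half, `false` the mirrored left half. -/
def sidx (s : Bool) (j : Fin n) : Fin (2 * n) :=
  ⟨cond s (n + j) (n - 1 - j), by have := j.isLt; cases s <;> simp <;> omega⟩

def bside (p : Fin (2 * n)) : Bool := decide (n ≤ (p : ℕ))

def bidx (p : Fin (2 * n)) : Fin n :=
  ⟨if n ≤ (p : ℕ) then p - n else n - 1 - p, by
    have := p.isLt; by_cases h : n ≤ (p : ℕ) <;> simp [h] <;> omega⟩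

@[simp] lemma sidx_val (s : Bool) (j : Fin n) :
    (sidx s j : ℕ) = cond s (n + j) (n - 1 - j) := rfl

@[simp] lemma bidx_val (p : Fin (2 * n)) :
    (bidx p : ℕ) = if n ≤ (p : ℕ) then p - n else n - 1 - p := rfl

lemma bside_sidx (s : Bool) (j : Fin n) : bside (sidx s j) = s := by
  have hj := j.isLt
  cases s <;> simp only [bside, sidx_val, Bool.cond_false, Bool.cond_true, decide_eq_true_eq,
    decide_eq_false_iff_not] <;> omega

lemma bidx_sidx (s : Bool) (j : Fin n) : bidx (sidx s j) = j := by
  have hj := j.isLt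
  rw [Fin.ext_iff]
  cases s
  · rw [bidx_val, sidx_val, Bool.cond_false, if_neg (by omega)]; omega
  · rw [bidx_val, sidx_val, Bool.cond_true, if_pos (by omega)]; omega

lemma sidx_bidx (p : Fin (2 * n)) : sidx (bside p) (bidx p) = p := by
  have := p.isLt
  rw [Fin.ext_iff, sidx_val]
  by_cases h : n ≤ (p : ℕ)
  · rw [show bside p = true by simp [bside, h], Bool.cond_true, bidx_val, if_pos h]; omega
  · rw [show bside p = false by simp [bside, h], Bool.cond_false, bidx_val, if_neg h]; omega

def ofSB : Bool × TLNode n n → TLNode (2 * n) (2 * n)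
  | (s, .inl j) => .inl (sidx s j)
  | (s, .inr j) => .inr (sidx s j)

def toSB : TLNode (2 * n) (2 * n) → Bool × TLNode n n
  | .inl p => (bside p, .inl (bidx p))
  | .inr p => (bside p, .inr (bidx p))

lemma toSB_ofSB (sb : Bool × TLNode n n) : toSB (ofSB sb) = sb := by
  obtain ⟨s, u⟩ := sb
  cases u <;> simp [ofSB, toSB, bside_sidx, bidx_sidx]

lemma ofSB_toSB (u : TLNode (2 * n) (2 * n)) : ofSB (toSB u) = u := by
  cases u <;> simp [ofSB, toSB, sidx_bidx]

lemma ofSB_inj : Function.Injective (ofSB (n := n)) := by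
  intro a b h
  rw [← toSB_ofSB a, ← toSB_ofSB b, h]

/-! #### Unfolding a blob diagram -/

/-- The unfolded pairing of a blob diagram on the doubled strip: a blobbed line
bounces off the mirror (its lifts pair with their own mirror images), an
unblobbed line gives two parallel lifted lines. -/
def uf (D : BlobDiagram n) (u : TLNode (2 * n) (2 * n)) : TLNode (2 * n) (2 * n) :=
  if D.deco (toSB u).2 then ofSB (!(toSB u).1, (toSB u).2)
  else ofSB ((toSB u).1, D.toTLDiagram.pair (toSB u).2)

lemma uf_ofSB (D : BlobDiagram n) (s : Bool) (b : TLNode n n) :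
    uf D (ofSB (s, b)) =
      if D.deco b then ofSB (!s, b) else ofSB (s, D.toTLDiagram.pair b) := by
  simp [uf, toSB_ofSB]

lemma uf_ofSB_deco (D : BlobDiagram n) (s : Bool) {b : TLNode n n} (h : D.deco b = true) :
    uf D (ofSB (s, b)) = ofSB (!s, b) := by rw [uf_ofSB, if_pos h]

lemma uf_ofSB_undeco (D : BlobDiagram n) (s : Bool) {b : TLNode n n} (h : D.deco b = false) :
    uf D (ofSB (s, b)) = ofSB (s, D.toTLDiagram.pair b) := by
  rw [uf_ofSB, if_neg (by simp [h])]

lemma uf_invol (D : BlobDiagram n) : Function.Involutive (uf D) := by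
  intro u
  rw [← ofSB_toSB u]
  obtain ⟨s, b⟩ := toSB u
  rcases h : D.deco b with hf | ht
  · rw [uf_ofSB_undeco D s h]
    have h2 : D.deco (D.toTLDiagram.pair b) = false := by rw [D.deco_pair, h]
    rw [uf_ofSB_undeco D s h2, D.toTLDiagram.involutive b]
  · rw [uf_ofSB_deco D s h, uf_ofSB_deco D (!s) h, Bool.not_not]

lemma uf_ff (D : BlobDiagram n) : ∀ u, uf D u ≠ u := by
  intro u
  rw [← ofSB_toSB u]
  obtain ⟨s, b⟩ := toSB u
  rcases h : D.deco b with hf | ht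
  · rw [uf_ofSB_undeco D s h]
    intro e
    exact D.toTLDiagram.fixedFree b (congrArg Prod.snd (ofSB_inj e))
  · rw [uf_ofSB_deco D s h]
    intro e
    have := congrArg Prod.fst (ofSB_inj e)
    simp at this

/-! #### The identity diagram -/

lemma isId_pair_inr {E : TLDiagram n n} (h : IsId E) (i : Fin n) :
    E.pair (.inr i) = .inl i := by
  rw [← h i, E.involutive]

lemma uf_id {B : BlobDiagram n} (hB : IsIdB B) (s : Bool) (b : TLNode n n) :
    uf B (ofSB (s, b)) = ofSB (s, match b with | .inl j => .inr j | .inr j => .inl j) := by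
  rw [uf_ofSB_undeco B s (hB.2 b)]
  cases b with
  | inl j => rw [hB.1 j]
  | inr j => rw [isId_pair_inr hB.1 j]

lemma suppP_uf_id {B : BlobDiagram n} (hB : IsIdB B) (v w : Fin (2 * n) → Fin 2) :
    SuppP (uf B) v w ↔ v = w := by
  constructor
  · intro h
    funext p
    have hrw : (Sum.inl p : TLNode (2 * n) (2 * n)) = ofSB (bside p, .inl (bidx p)) := by
      simp [ofSB, sidx_bidx]
    have hc := h (Sum.inl p)
    rw [hrw, uf_id hB] at hc
    simp only [ofSB, sidx_bidx, lam_inl, lam_inr] at hc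
    exact ((f2a _ _).mp hc).symm
  · rintro rfl c
    rw [← ofSB_toSB c]
    obtain ⟨s, b⟩ := toSB c
    cases b with
    | inl j =>
      rw [uf_id hB]
      simp only [ofSB, lam_inl, lam_inr]
      exact f2e _
    | inr j =>
      rw [uf_id hB]
      simp only [ofSB, lam_inl, lam_inr]
      exact f2f _

lemma maskIs_one {K : Type*} [CommRing K] [IsDomain K] {B : BlobDiagram n} (hB : IsIdB B) :
    MaskIs (1 : Matrix (Fin (2 * n) → Fin 2) (Fin (2 * n) → Fin 2) K) (uf B) := by
  intro v w
  rw [Matrix.one_apply, suppP_uf_id hB]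
  by_cases h : v = w
  · exact iff_of_false (by simp [h]) (not_not_intro h)
  · exact iff_of_true (by simp [h]) h

/-! #### Concatenation combinatorics -/

/-- Projection of a concatenation node to the middle/outer label. -/
def projT : TriNode n n n → TLNode n n
  | .inl k => .inl k
  | .inr (.inl k) => .inl k
  | .inr (.inr k) => .inr k

@[simp] lemma projT_inOut (u : TLNode n n) : projT (inOut u) = u := by
  cases u <;> rfl

@[simp] lemma projT_inDown (a : TLNode n n) : projT (inDown a) = a := by
  cases a <;> rfl

lemma linked_symm {B D : TLDiagram n n} : Symmetric (Linked B D) := by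
  rintro x y (⟨a, h1, h2⟩ | ⟨a, h1, h2⟩)
  · exact Or.inl ⟨B.pair a, h2, by rw [B.involutive]; exact h1⟩
  · exact Or.inr ⟨D.pair a, h2, by rw [D.involutive]; exact h1⟩

lemma joined_symm {B D : TLDiagram n n} : Symmetric (Joined B D) :=
  fun _ _ h => by
    induction h with
    | refl => exact Relation.ReflTransGen.refl
    | tail _ hbc ih => exact Relation.ReflTransGen.head (linked_symm hbc) ih

lemma up_edge (B D : TLDiagram n n) (a : TLNode n n) :
    Linked B D (inUp a) (inUp (B.pair a)) := Or.inl ⟨a, rfl, rfl⟩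

lemma down_edge (B D : TLDiagram n n) (a : TLNode n n) :
    Linked B D (inDown a) (inDown (D.pair a)) := Or.inr ⟨a, rfl, rfl⟩

lemma mk_down_pair {B D : TLDiagram n n} (a : TLNode n n) :
    Quot.mk (Linked B D) (inDown a) = Quot.mk (Linked B D) (inDown (D.pair a)) :=
  Quot.sound (down_edge B D a)

/-! #### Composition with the generator `e` -/

section CompE

variable {B D E : BlobDiagram n}

lemma joined_out_down_e (hid : IsId B.toTLDiagram) (u : TLNode n n) :
    Joined B.toTLDiagram D.toTLDiagram (inOut u) (inDown u) := by
  cases u with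
  | inl k =>
    refine Relation.ReflTransGen.single (Or.inl ⟨.inl k, rfl, ?_⟩)
    rw [hid k]; rfl
  | inr k => exact Relation.ReflTransGen.refl

lemma joined_out_pair_e (hid : IsId B.toTLDiagram) (u : TLNode n n) :
    Joined B.toTLDiagram D.toTLDiagram (inOut u) (inOut (D.toTLDiagram.pair u)) :=
  ((joined_out_down_e hid u).trans
    (Relation.ReflTransGen.single (down_edge _ _ u))).trans
    (joined_symm (joined_out_down_e hid _))

lemma reach_e (hid : IsId B.toTLDiagram) (u : TLNode n n) :
    ∀ z, Joined B.toTLDiagram D.toTLDiagram (inOut u) z →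
      projT z = u ∨ projT z = D.toTLDiagram.pair u := by
  intro z hz
  induction hz with
  | refl => left; simp
  | tail h1 h2 ih =>
    rcases h2 with ⟨a, ha, hb⟩ | ⟨a, ha, hb⟩
    · have : projT (inUp (B.toTLDiagram.pair a)) = projT (inUp a) := by
        cases a with
        | inl k => rw [hid k]; rfl
        | inr k => rw [isId_pair_inr hid k]; rfl
      rw [← hb, this, ha]
      exact ih
    · rw [← hb, projT_inDown]
      rcases ih with h | h
      · right; rw [← ha, projT_inDown] at h; rw [h]
      · left; rw [← ha, projT_inDown] at h; rw [h, D.toTLDiagram.involutive]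

lemma composite_e (hB : IsEB B) (hc : IsBlobComposite B D E) (hn : 0 < n) :
    (∀ u, E.toTLDiagram.pair u = D.toTLDiagram.pair u) ∧
    (∀ u, E.deco u = true ↔
      (D.deco u = true ∨ u = Sum.inl ⟨0, hn⟩ ∨
        D.toTLDiagram.pair (Sum.inl ⟨0, hn⟩) = u)) := by
  obtain ⟨hid, hn', hdec⟩ := hB
  constructor
  · intro u
    exact (hc.1 u (D.toTLDiagram.pair u)).mpr
      ⟨Ne.symm (D.toTLDiagram.fixedFree u), joined_out_pair_e hid u⟩
  · intro u
    constructor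
    · intro hE
      obtain ⟨w', hj, hdw⟩ := (hc.2 u).mp hE
      have hreach := reach_e hid u w' hj
      rcases hdw with ⟨a, haw, hBd⟩ | ⟨a, haw, hDd⟩
      · have ha0 : a = Sum.inl ⟨0, hn⟩ ∨ a = Sum.inr ⟨0, hn⟩ := (hdec a).mp hBd
        have hpw : projT w' = Sum.inl ⟨0, hn⟩ := by
          rcases ha0 with rfl | rfl <;> rw [← haw] <;> rfl
        rw [hpw] at hreach
        rcases hreach with h | h
        · exact Or.inr (Or.inl h.symm)
        · right; right
          rw [h, D.toTLDiagram.involutive]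
      · have hpw : projT w' = a := by rw [← haw, projT_inDown]
        rw [hpw] at hreach
        rcases hreach with rfl | h
        · exact Or.inl hDd
        · left
          rw [← D.deco_pair u, ← h]
          exact hDd
    · intro h
      rcases h with h | rfl | h
      · exact (hc.2 u).mpr ⟨inDown u, joined_out_down_e hid u, Or.inr ⟨u, rfl, h⟩⟩
      · refine (hc.2 _).mpr ⟨inOut (Sum.inl ⟨0, hn⟩), Relation.ReflTransGen.refl,
          Or.inl ⟨Sum.inl ⟨0, hn⟩, rfl, (hdec _).mpr (Or.inl rfl)⟩⟩
      · refine (hc.2 u).mpr ⟨inDown (Sum.inl ⟨0, hn⟩), ?_,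
          Or.inl ⟨Sum.inr ⟨0, hn⟩, rfl, (hdec _).mpr (Or.inr rfl)⟩⟩
        subst h
        refine (joined_out_down_e hid _).tail ?_
        have := down_edge B.toTLDiagram D.toTLDiagram
          (D.toTLDiagram.pair (Sum.inl ⟨0, hn⟩))
        rwa [D.toTLDiagram.involutive] at this
  
end CompE

/-! #### Composition with the generator `𝒰_i` -/

section CompU

variable {U D E : BlobDiagram n} {a1 a2 : Fin n}

/-- Abstract form of the generator facts extracted from `IsUB`. -/
structure UFacts (U : BlobDiagram n) (a1 a2 : Fin n) : Prop where
  ne : a1 ≠ a2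
  pl : U.toTLDiagram.pair (.inl a1) = .inl a2
  pr : U.toTLDiagram.pair (.inr a1) = .inr a2
  pv : ∀ k, k ≠ a1 → k ≠ a2 → U.toTLDiagram.pair (.inl k) = .inr k
  dec : ∀ v, U.deco v = false

namespace UFacts

variable (hF : UFacts U a1 a2)

include hF

lemma pl' : U.toTLDiagram.pair (.inl a2) = .inl a1 := by
  rw [← hF.pl, U.toTLDiagram.involutive]

lemma pr' : U.toTLDiagram.pair (.inr a2) = .inr a1 := by
  rw [← hF.pr, U.toTLDiagram.involutive]

lemma pv' : ∀ k, k ≠ a1 → k ≠ a2 → U.toTLDiagram.pair (.inr k) = .inl k := by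
  intro k h1 h2
  rw [← hF.pv k h1 h2, U.toTLDiagram.involutive]

lemma ju12 : Joined U.toTLDiagram D.toTLDiagram (inOut (.inl a1)) (inOut (.inl a2)) :=
  Relation.ReflTransGen.single (Or.inl ⟨.inl a1, rfl, by rw [hF.pl]; rfl⟩)

lemma jmid : Joined U.toTLDiagram D.toTLDiagram (inDown (.inl a1)) (inDown (.inl a2)) :=
  Relation.ReflTransGen.single (Or.inl ⟨.inr a1, rfl, by rw [hF.pr]; rfl⟩)

lemma jod : ∀ u : TLNode n n, u ≠ .inl a1 → u ≠ .inl a2 →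
    Joined U.toTLDiagram D.toTLDiagram (inOut u) (inDown u) := by
  intro u hu1 hu2
  cases u with
  | inl k =>
    have hk1 : k ≠ a1 := fun e => hu1 (by rw [e])
    have hk2 : k ≠ a2 := fun e => hu2 (by rw [e])
    exact Relation.ReflTransGen.single (Or.inl ⟨.inl k, rfl, by rw [hF.pv k hk1 hk2]; rfl⟩)
  | inr k => exact Relation.ReflTransGen.refl

/-- The reachable set of the outer node `a1` on top of the concatenation. -/
lemma reachTop : ∀ z, Joined U.toTLDiagram D.toTLDiagram (inOut (.inl a1)) z →
    z = Sum.inl a1 ∨ z = Sum.inl a2 := by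
  intro z hz
  induction hz with
  | refl => left; rfl
  | tail h1 h2 ih =>
    rcases h2 with ⟨x, hx, hy⟩ | ⟨x, hx, hy⟩
    · cases x with
      | inl k =>
        have hb : (Sum.inl k : TriNode n n n) = _ := hx
        rcases ih with rfl | rfl
        · have hk : k = a1 := by
            have := hx
            simp only [inUp] at this
            exact (Sum.inl.inj this)
          subst hk
          right; rw [← hy, hF.pl]; rfl
        · have hk : k = a2 := by
            have := hx
            simp only [inUp] at this
            exact (Sum.inl.inj this)
          subst hk
          left; rw [← hy, hF.pl']; rfl
      | inr k =>
        exfalso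
        rcases ih with rfl | rfl <;> simp [inUp] at hx
    · exfalso
      rcases ih with rfl | rfl <;> cases x <;> simp [inDown] at hx

/-- The orbit invariant for reachability from a generic outer node. -/
lemma reachU {u : TLNode n n} (hu1 : u ≠ .inl a1) (hu2 : u ≠ .inl a2) :
    ∀ z, Joined U.toTLDiagram D.toTLDiagram (inOut u) z →
      (projT z = u ∨ projT z = D.toTLDiagram.pair u ∨
        ((D.toTLDiagram.pair u = .inl a1 ∨ D.toTLDiagram.pair u = .inl a2) ∧
         (projT z = .inl a1 ∨ projT z = .inl a2 ∨
          projT z = D.toTLDiagram.pair (.inl a1) ∨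
          projT z = D.toTLDiagram.pair (.inl a2)))) := by
  set pD := D.toTLDiagram.pair with hpD
  set P : TLNode n n → Prop := fun p => p = u ∨ p = pD u ∨
    ((pD u = .inl a1 ∨ pD u = .inl a2) ∧
     (p = .inl a1 ∨ p = .inl a2 ∨ p = pD (.inl a1) ∨ p = pD (.inl a2))) with hP
  have stepPair : ∀ p, P p → P (pD p) := by
    intro p hp
    rcases hp with rfl | rfl | ⟨hs, hb⟩
    · exact Or.inr (Or.inl rfl)
    · left; rw [hpD, D.toTLDiagram.involutive]
    · refine Or.inr (Or.inr ⟨hs, ?_⟩)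
      rcases hb with rfl | rfl | rfl | rfl
      · right; right; left; rfl
      · right; right; right; rfl
      · left; rw [hpD, D.toTLDiagram.involutive]
      · right; left; rw [hpD, D.toTLDiagram.involutive]
  have stepSwap : ∀ p, P p → (p = .inl a1 ∨ p = .inl a2) → P (.inl a1) ∧ P (.inl a2) := by
    intro p hp hpc
    have hside : pD u = .inl a1 ∨ pD u = .inl a2 := by
      rcases hp with rfl | rfl | ⟨hs, _⟩
      · exact absurd hpc (by rintro (rfl | rfl); exact hu1 rfl; exact hu2 rfl)
      · rcases hpc with h | h
        · exact Or.inl h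
        · exact Or.inr h
      · exact hs
    exact ⟨Or.inr (Or.inr ⟨hside, Or.inl rfl⟩),
      Or.inr (Or.inr ⟨hside, Or.inr (Or.inl rfl)⟩)⟩
  suffices h : ∀ z, Joined U.toTLDiagram D.toTLDiagram (inOut u) z → P (projT z) by
    intro z hz; exact h z hz
  intro z hz
  induction hz with
  | refl => left; simp
  | @tail b c h1 h2 ih =>
    rcases h2 with ⟨x, hx, hy⟩ | ⟨x, hx, hy⟩
    · subst hx; subst hy
      cases x with
      | inl k =>
        have ih' : P (Sum.inl k) := ih
        rcases eq_or_ne k a1 with rfl | hk1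
        · rw [hF.pl]
          exact (stepSwap _ ih' (Or.inl rfl)).2
        rcases eq_or_ne k a2 with rfl | hk2
        · rw [hF.pl']
          exact (stepSwap _ ih' (Or.inr rfl)).1
        · rw [hF.pv k hk1 hk2]
          exact ih'
      | inr k =>
        have ih' : P (Sum.inl k) := ih
        rcases eq_or_ne k a1 with rfl | hk1
        · rw [hF.pr]
          exact (stepSwap _ ih' (Or.inl rfl)).2
        rcases eq_or_ne k a2 with rfl | hk2
        · rw [hF.pr']
          exact (stepSwap _ ih' (Or.inr rfl)).1
        · rw [hF.pv' k hk1 hk2]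
          exact ih'
    · subst hx; subst hy
      have ih' : P (x) := by
        have : projT (inDown x) = x := projT_inDown x
        rwa [this] at ih
      have : projT (inDown (D.toTLDiagram.pair x)) = pD x := by
        rw [projT_inDown, hpD]
      rw [this]
      exact stepPair _ ih'

end UFacts

lemma composite_u (hF : UFacts U a1 a2) (hc : IsBlobComposite U D E)
    (hnp : D.toTLDiagram.pair (.inl a1) ≠ .inl a2) :
    (∀ u, E.toTLDiagram.pair u = capU (Sum.inl a1) (Sum.inl a2) D.toTLDiagram.pair u) ∧
    (E.deco (Sum.inl a1) = false ∧ E.deco (Sum.inl a2) = false ∧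
     ∀ u, u ≠ Sum.inl a1 → u ≠ Sum.inl a2 →
       (E.deco u = true ↔ (D.deco u = true ∨
         (D.toTLDiagram.pair u = .inl a1 ∧ D.deco (.inl a2) = true) ∨
         (D.toTLDiagram.pair u = .inl a2 ∧ D.deco (.inl a1) = true)))) := by
  set pD := D.toTLDiagram.pair with hpD
  have hinv : Function.Involutive pD := D.toTLDiagram.involutive
  have hff : ∀ v, pD v ≠ v := D.toTLDiagram.fixedFree
  have hne12 : (Sum.inl a1 : TLNode n n) ≠ Sum.inl a2 := by
    simp only [ne_eq, Sum.inl.injEq]; exact hF.ne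
  have hqp : pD (.inl a2) ≠ .inl a1 := capU_qp hinv hnp
  refine ⟨?_, ?_, ?_, ?_⟩
  · -- the pairing of E
    intro u
    rcases eq_or_ne u (Sum.inl a1) with rfl | hc1
    · rw [capU_p]
      exact (hc.1 _ _).mpr ⟨hne12, hF.ju12⟩
    rcases eq_or_ne u (Sum.inl a2) with rfl | hc2
    · rw [capU_q hne12]
      exact (hc.1 _ _).mpr ⟨hne12.symm, joined_symm hF.ju12⟩
    rcases eq_or_ne (pD u) (Sum.inl a1) with h3 | h3
    · rw [capU_of_eq_p hc1 hc2 h3]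
      refine (hc.1 _ _).mpr ⟨?_, ?_⟩
      · intro e
        apply hne12
        rw [← h3, e, hinv]
      · refine (((hF.jod u hc1 hc2).tail ?_).trans hF.jmid).trans ?_
        · have := down_edge U.toTLDiagram D.toTLDiagram u
          rwa [← hpD, h3] at this
        · refine (Relation.ReflTransGen.single ?_).trans
            (joined_symm (hF.jod (pD (.inl a2)) hqp (hff _)))
          exact down_edge U.toTLDiagram D.toTLDiagram (.inl a2)
    rcases eq_or_ne (pD u) (Sum.inl a2) with h4 | h4
    · rw [capU_of_eq_q hinv hne12 hnp hc2 h4]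
      refine (hc.1 _ _).mpr ⟨?_, ?_⟩
      · intro e
        apply hne12
        rw [← h4, e, hinv]
      · refine (((hF.jod u hc1 hc2).tail ?_).trans (joined_symm hF.jmid)).trans ?_
        · have := down_edge U.toTLDiagram D.toTLDiagram u
          rwa [← hpD, h4] at this
        · refine (Relation.ReflTransGen.single ?_).trans
            (joined_symm (hF.jod (pD (.inl a1)) (hff _) hnp))
          exact down_edge U.toTLDiagram D.toTLDiagram (.inl a1)
    · rw [capU_of_ne hc1 hc2 h3 h4]
      refine (hc.1 _ _).mpr ⟨(hff u).symm, ?_⟩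
      exact ((hF.jod u hc1 hc2).tail (down_edge _ _ u)).trans
        (joined_symm (hF.jod (pD u) h3 h4))
  · -- E.deco (inl a1) = false
    rw [← Bool.not_eq_true]
    intro hE
    obtain ⟨w', hj, hdw⟩ := (hc.2 _).mp hE
    rcases hdw with ⟨x, hxw, hUd⟩ | ⟨x, hxw, hDd⟩
    · rw [hF.dec x] at hUd; exact Bool.false_ne_true hUd
    · rcases hF.reachTop (D := D) w' hj with rfl | rfl <;> cases x <;> simp [inDown] at hxw
  · -- E.deco (inl a2) = false
    rw [← Bool.not_eq_true]
    intro hE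
    obtain ⟨w', hj, hdw⟩ := (hc.2 _).mp hE
    have hj' : Joined U.toTLDiagram D.toTLDiagram (inOut (.inl a1)) w' :=
      hF.ju12.trans hj
    rcases hdw with ⟨x, hxw, hUd⟩ | ⟨x, hxw, hDd⟩
    · rw [hF.dec x] at hUd; exact Bool.false_ne_true hUd
    · rcases hF.reachTop (D := D) w' hj' with rfl | rfl <;> cases x <;> simp [inDown] at hxw
  · -- deco of generic lines
    intro u hu1 hu2
    constructor
    · intro hE
      obtain ⟨w', hj, hdw⟩ := (hc.2 u).mp hE
      rcases hdw with ⟨x, hxw, hUd⟩ | ⟨x, hxw, hDd⟩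
      · rw [hF.dec x] at hUd; exact absurd hUd Bool.false_ne_true
      have hpw : projT w' = x := by rw [← hxw]; simp
      have hreach := hF.reachU (D := D) hu1 hu2 w' hj
      rw [hpw] at hreach
      rcases hreach with rfl | rfl | ⟨hs, hb⟩
      · exact Or.inl hDd
      · left; rw [← D.deco_pair u]; exact hDd
      · have hb' : D.deco (.inl a1) = true ∨ D.deco (.inl a2) = true := by
          rcases hb with rfl | rfl | rfl | rfl
          · exact Or.inl hDd
          · exact Or.inr hDd
          · left; rw [← D.deco_pair (.inl a1)]; exact hDd
          · right; rw [← D.deco_pair (.inl a2)]; exact hDd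
        rcases hs with hs | hs
        · rcases hb' with h | h
          · left; rw [← D.deco_pair u, hs]; exact h
          · exact Or.inr (Or.inl ⟨hs, h⟩)
        · rcases hb' with h | h
          · exact Or.inr (Or.inr ⟨hs, h⟩)
          · left; rw [← D.deco_pair u, hs]; exact h
    · rintro (h | ⟨hpa, hd2⟩ | ⟨hpa, hd1⟩)
      · exact (hc.2 u).mpr ⟨inDown u, hF.jod u hu1 hu2, Or.inr ⟨u, rfl, h⟩⟩
      · refine (hc.2 u).mpr ⟨inDown (.inl a2), ?_, Or.inr ⟨.inl a2, rfl, hd2⟩⟩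
        refine ((hF.jod u hu1 hu2).tail ?_).trans hF.jmid
        have := down_edge U.toTLDiagram D.toTLDiagram u
        rwa [← hpD, hpa] at this
      · refine (hc.2 u).mpr ⟨inDown (.inl a1), ?_, Or.inr ⟨.inl a1, rfl, hd1⟩⟩
        refine ((hF.jod u hu1 hu2).tail ?_).trans (joined_symm hF.jmid)
        have := down_edge U.toTLDiagram D.toTLDiagram u
        rwa [← hpD, hpa] at this

end CompU

/-! #### Counting lemmas -/

lemma nodePos_inj : Function.Injective (nodePos (n := n) (m := n)) := by
  rintro (a | a) (b | b) h <;>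
    [skip; skip; skip; skip] <;>
    first
    | (have ha := a.isLt; have hb := b.isLt
       simp only [nodePos] at h
       exact congrArg _ (Fin.ext (by omega)))
    | (exfalso; have ha := a.isLt; have hb := b.isLt
       simp only [nodePos] at h; omega)

lemma line_rep {D : BlobDiagram n} {a : TLNode n n} (hd : D.deco a = true) :
    ∃ r, (D.deco r = true ∧ nodePos r < nodePos (D.toTLDiagram.pair r)) ∧
      (r = a ∨ r = D.toTLDiagram.pair a) := by
  have hne : nodePos a ≠ nodePos (D.toTLDiagram.pair a) :=
    fun e => D.toTLDiagram.fixedFree a (nodePos_inj e.symm)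
  rcases lt_or_gt_of_ne hne with h | h
  · exact ⟨a, ⟨hd, h⟩, Or.inl rfl⟩
  · refine ⟨D.toTLDiagram.pair a, ⟨by rw [D.deco_pair]; exact hd, ?_⟩, Or.inr rfl⟩
    rw [D.toTLDiagram.involutive]
    exact h

lemma decoLines_e {B : BlobDiagram n} (hB : IsEB B) : decoLines B = 1 := by
  obtain ⟨hid, hn, hdec⟩ := hB
  unfold decoLines
  have : Finset.univ.filter (fun v : TLNode n n =>
      B.deco v = true ∧ nodePos v < nodePos (B.toTLDiagram.pair v)) = {Sum.inl ⟨0, hn⟩} := by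
    ext v
    simp only [Finset.mem_filter, Finset.mem_univ, true_and, Finset.mem_singleton]
    constructor
    · rintro ⟨hd, hp⟩
      rcases (hdec v).mp hd with rfl | rfl
      · rfl
      · exfalso
        rw [isId_pair_inr hid] at hp
        simp only [nodePos] at hp
        omega
    · rintro rfl
      refine ⟨(hdec _).mpr (Or.inl rfl), ?_⟩
      rw [hid]
      simp only [nodePos]
      omega
  rw [this, Finset.card_singleton]

lemma decoLines_ub {U : BlobDiagram n} (hd : ∀ v, U.deco v = false) : decoLines U = 0 := by
  unfold decoLines
  rw [Finset.card_eq_zero]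
  ext v
  simp [hd]

lemma blobbedComps_le_card {B D : BlobDiagram n} (S : Finset (TLNode n n))
    (hcov : ∀ c : Quot (Linked B.toTLDiagram D.toTLDiagram),
      (∃ v, Quot.mk (Linked B.toTLDiagram D.toTLDiagram) v = c ∧ DecoratedAt B D v) →
      ∃ a ∈ S, Quot.mk (Linked B.toTLDiagram D.toTLDiagram) (inDown a) = c) :
    blobbedComps B D ≤ S.card := by
  classical
  unfold blobbedComps
  by_cases hne : Nonempty {c : Quot (Linked B.toTLDiagram D.toTLDiagram) //
      ∃ v, Quot.mk (Linked B.toTLDiagram D.toTLDiagram) v = c ∧ DecoratedAt B D v}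
  · obtain ⟨d⟩ := hne
    have hsurj : Function.Surjective (fun a : {a // a ∈ S} =>
        if h : ∃ v, Quot.mk (Linked B.toTLDiagram D.toTLDiagram) v =
            Quot.mk (Linked B.toTLDiagram D.toTLDiagram) (inDown a.1) ∧ DecoratedAt B D v
        then (⟨Quot.mk (Linked B.toTLDiagram D.toTLDiagram) (inDown a.1), h⟩ :
          {c // ∃ v, Quot.mk (Linked B.toTLDiagram D.toTLDiagram) v = c ∧ DecoratedAt B D v})
        else d) := by
      rintro ⟨c, hc⟩
      obtain ⟨a, haS, hac⟩ := hcov c hc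
      refine ⟨⟨a, haS⟩, ?_⟩
      simp only
      rw [dif_pos (by rw [hac]; exact hc)]
      exact Subtype.ext hac
    calc Nat.card _ ≤ Nat.card {a // a ∈ S} := Nat.card_le_card_of_surjective _ hsurj
    _ = S.card := by rw [Nat.card_eq_fintype_card, Fintype.card_coe]
  · rw [not_nonempty_iff] at hne
    rw [Nat.card_of_isEmpty]
    exact Nat.zero_le _

/-- If `deltaExp e D = 0` then the line of `D` at the first northern node is
not decorated. -/
lemma deco0_of_deltaExp_e {B D : BlobDiagram n} (hB : IsEB B) (hn : 0 < n)
    (hd : deltaExp B D = 0) : D.deco (Sum.inl ⟨0, hn⟩) = false := by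
  obtain ⟨hid, hn', hdec⟩ := hB
  by_contra hcc
  rw [Bool.not_eq_false] at hcc
  have hcov : ∀ c : Quot (Linked B.toTLDiagram D.toTLDiagram),
      (∃ v, Quot.mk (Linked B.toTLDiagram D.toTLDiagram) v = c ∧ DecoratedAt B D v) →
      ∃ a ∈ Finset.univ.filter (fun v : TLNode n n =>
          D.deco v = true ∧ nodePos v < nodePos (D.toTLDiagram.pair v)),
        Quot.mk (Linked B.toTLDiagram D.toTLDiagram) (inDown a) = c := by
    rintro c ⟨v', hvc, hdw⟩
    rcases hdw with ⟨x, hxw, hBd⟩ | ⟨x, hxw, hDd⟩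
    · -- a blob of `e`: the component contains the line of `D` at node `0`
      have hmk : Quot.mk (Linked B.toTLDiagram D.toTLDiagram)
          (inDown (Sum.inl ⟨0, hn⟩)) = c := by
        rcases (hdec x).mp hBd with rfl | rfl
        · rw [← hvc, ← hxw]
          have h := Quot.sound (up_edge B.toTLDiagram D.toTLDiagram (.inl ⟨0, hn⟩))
          rw [hid] at h
          exact h.symm
        · rw [← hvc, ← hxw]; rfl
      obtain ⟨r, hr, hror⟩ := line_rep (D := D) hcc
      refine ⟨r, by simp only [Finset.mem_filter, Finset.mem_univ, true_and]; exact hr, ?_⟩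
      rcases hror with rfl | rfl
      · exact hmk
      · rw [← mk_down_pair]
        exact hmk
    · obtain ⟨r, hr, hror⟩ := line_rep (D := D) hDd
      refine ⟨r, by simp only [Finset.mem_filter, Finset.mem_univ, true_and]; exact hr, ?_⟩
      rcases hror with rfl | rfl
      · rw [← hvc, ← hxw]
      · rw [← hvc, ← hxw, ← mk_down_pair]
  have hle : blobbedComps B D ≤ decoLines D := by
    unfold decoLines
    exact blobbedComps_le_card _ hcov
  have h1 : decoLines B = 1 := decoLines_e ⟨hid, hn', hdec⟩
  unfold deltaExp at hd
  rw [h1] at hd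
  omega

/-- If the concatenation `𝒰_i | D` has no closed loops, then `D` does not pair the
capped nodes. -/
lemma pair_ne_of_zeta {U D : BlobDiagram n} {a1 a2 : Fin n} (hF : UFacts U a1 a2)
    (hzp : zetaPlain U D = 0) (hzb : zetaBlob U D = 0) :
    D.toTLDiagram.pair (.inl a1) ≠ .inl a2 := by
  intro heq
  have heq' : D.toTLDiagram.pair (.inl a2) = .inl a1 := by
    rw [← heq, D.toTLDiagram.involutive]
  have hstep : ∀ x y, Linked U.toTLDiagram D.toTLDiagram x y →
      (x = Sum.inr (Sum.inl a1) ∨ x = Sum.inr (Sum.inl a2)) →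
      (y = Sum.inr (Sum.inl a1) ∨ y = Sum.inr (Sum.inl a2)) := by
    rintro x y (⟨t, hx, hy⟩ | ⟨t, hx, hy⟩) hxm
    · cases t with
      | inl k => exfalso; rcases hxm with rfl | rfl <;> simp [inUp] at hx
      | inr k =>
        have hk : k = a1 ∨ k = a2 := by
          rcases hxm with rfl | rfl
          · left
            have : (Sum.inr (Sum.inl k) : TriNode n n n) = Sum.inr (Sum.inl a1) := hx
            exact Sum.inl.inj (Sum.inr.inj this)
          · right
            have : (Sum.inr (Sum.inl k) : TriNode n n n) = Sum.inr (Sum.inl a2) := hx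
            exact Sum.inl.inj (Sum.inr.inj this)
        rcases hk with rfl | rfl
        · right; rw [← hy, hF.pr]; rfl
        · left; rw [← hy, hF.pr']; rfl
    · cases t with
      | inl k =>
        have hk : k = a1 ∨ k = a2 := by
          rcases hxm with rfl | rfl
          · left
            have : (Sum.inr (Sum.inl k) : TriNode n n n) = Sum.inr (Sum.inl a1) := hx
            exact Sum.inl.inj (Sum.inr.inj this)
          · right
            have : (Sum.inr (Sum.inl k) : TriNode n n n) = Sum.inr (Sum.inl a2) := hx
            exact Sum.inl.inj (Sum.inr.inj this)
        rcases hk with rfl | rfl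
        · right; rw [← hy, heq]; rfl
        · left; rw [← hy, heq']; rfl
      | inr k => exfalso; rcases hxm with rfl | rfl <;> simp [inDown] at hx
  have hcl : ∀ x y, EqvGen (Linked U.toTLDiagram D.toTLDiagram) x y →
      ((x = Sum.inr (Sum.inl a1) ∨ x = Sum.inr (Sum.inl a2)) ↔
       (y = Sum.inr (Sum.inl a1) ∨ y = Sum.inr (Sum.inl a2))) := by
    intro x y h
    induction h with
    | rel a b h => exact ⟨hstep a b h, hstep b a (linked_symm h)⟩
    | refl a => exact Iff.rfl
    | symm a b _ ih => exact ih.symm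
    | trans a b c _ _ ih1 ih2 => exact ih1.trans ih2
  have hmid : ∀ v, Quot.mk (Linked U.toTLDiagram D.toTLDiagram) v =
      Quot.mk (Linked U.toTLDiagram D.toTLDiagram) (Sum.inr (Sum.inl a1)) → IsMiddle v := by
    intro v hv
    have := (hcl v _ (Quot.eqvGen_exact hv)).mpr (Or.inl rfl)
    rcases this with rfl | rfl <;> trivial
  by_cases hdec : ∃ v, Quot.mk (Linked U.toTLDiagram D.toTLDiagram) v =
      Quot.mk (Linked U.toTLDiagram D.toTLDiagram) (Sum.inr (Sum.inl a1)) ∧ DecoratedAt U D v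
  · have hpos : 0 < zetaBlob U D := by
      unfold zetaBlob
      haveI : Nonempty {c : Quot (Linked U.toTLDiagram D.toTLDiagram) //
          (∀ v, Quot.mk _ v = c → IsMiddle v) ∧
          ∃ v, Quot.mk _ v = c ∧ DecoratedAt U D v} :=
        ⟨⟨Quot.mk _ (Sum.inr (Sum.inl a1)), hmid, hdec⟩⟩
      exact Nat.card_pos
    omega
  · push_neg at hdec
    have hpos : 0 < zetaPlain U D := by
      unfold zetaPlain
      haveI : Nonempty {c : Quot (Linked U.toTLDiagram D.toTLDiagram) //
          (∀ v, Quot.mk _ v = c → IsMiddle v) ∧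
          ∀ v, Quot.mk _ v = c → ¬DecoratedAt U D v} :=
        ⟨⟨Quot.mk _ (Sum.inr (Sum.inl a1)), hmid, fun v hv => hdec v hv⟩⟩
      exact Nat.card_pos
    omega

/-- If moreover `deltaExp 𝒰_i D = 0` then the lines of `D` at the two capped nodes
are not both decorated. -/
lemma not_both_deco {U D : BlobDiagram n} {a1 a2 : Fin n} (hF : UFacts U a1 a2)
    (hnp : D.toTLDiagram.pair (.inl a1) ≠ .inl a2) (hd : deltaExp U D = 0) :
    ¬(D.deco (.inl a1) = true ∧ D.deco (.inl a2) = true) := by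
  classical
  rintro ⟨hd1, hd2⟩
  have hinv := D.toTLDiagram.involutive
  have hne12 : (Sum.inl a1 : TLNode n n) ≠ .inl a2 := by
    simp only [ne_eq, Sum.inl.injEq]; exact hF.ne
  obtain ⟨r1, hr1, hr1or⟩ := line_rep (D := D) hd1
  obtain ⟨r2, hr2, hr2or⟩ := line_rep (D := D) hd2
  have hr12 : r1 ≠ r2 := by
    rcases hr1or with rfl | rfl <;> rcases hr2or with rfl | rfl
    · exact hne12
    · intro e; exact hnp (by rw [e, hinv])
    · intro e; exact hnp e
    · intro e; exact hne12 (hinv.injective e)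
  set F := Finset.univ.filter (fun v : TLNode n n =>
    D.deco v = true ∧ nodePos v < nodePos (D.toTLDiagram.pair v)) with hF'
  have hr2F : r2 ∈ F := by simp only [hF', Finset.mem_filter, Finset.mem_univ, true_and]; exact hr2
  have hmid12 : Quot.mk (Linked U.toTLDiagram D.toTLDiagram) (inDown (Sum.inl a1)) =
      Quot.mk (Linked U.toTLDiagram D.toTLDiagram) (inDown (Sum.inl a2)) :=
    Quot.sound (Or.inl ⟨.inr a1, rfl, by rw [hF.pr]; rfl⟩)
  have hcov : ∀ c : Quot (Linked U.toTLDiagram D.toTLDiagram),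
      (∃ v, Quot.mk (Linked U.toTLDiagram D.toTLDiagram) v = c ∧ DecoratedAt U D v) →
      ∃ a ∈ F.erase r2, Quot.mk (Linked U.toTLDiagram D.toTLDiagram) (inDown a) = c := by
    rintro c ⟨v', hvc, hdw⟩
    rcases hdw with ⟨x, hxw, hUd⟩ | ⟨x, hxw, hDd⟩
    · rw [hF.dec x] at hUd; exact absurd hUd Bool.false_ne_true
    obtain ⟨r, hr, hror⟩ := line_rep (D := D) hDd
    have hrF : r ∈ F := by
      simp only [hF', Finset.mem_filter, Finset.mem_univ, true_and]; exact hr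
    have hrc : Quot.mk (Linked U.toTLDiagram D.toTLDiagram) (inDown r) = c := by
      rcases hror with rfl | rfl
      · rw [← hvc, ← hxw]
      · rw [← hvc, ← hxw, ← mk_down_pair]
    rcases eq_or_ne r r2 with rfl | hrr2
    · -- switch to the representative of the line at `a1`
      have hc1 : Quot.mk (Linked U.toTLDiagram D.toTLDiagram) (inDown r1) = c := by
        have e1 : Quot.mk (Linked U.toTLDiagram D.toTLDiagram) (inDown r1) =
            Quot.mk (Linked U.toTLDiagram D.toTLDiagram) (inDown (Sum.inl a1)) := by
          rcases hr1or with rfl | rfl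
          · rfl
          · rw [← mk_down_pair]
        have e2 : Quot.mk (Linked U.toTLDiagram D.toTLDiagram) (inDown (Sum.inl a2)) =
            Quot.mk (Linked U.toTLDiagram D.toTLDiagram) (inDown r) := by
          rcases hr2or with rfl | rfl
          · rfl
          · rw [← mk_down_pair]
        rw [e1, hmid12, e2, hrc]
      refine ⟨r1, Finset.mem_erase.mpr ⟨hr12, ?_⟩, hc1⟩
      simp only [hF', Finset.mem_filter, Finset.mem_univ, true_and]; exact hr1
    · exact ⟨r, Finset.mem_erase.mpr ⟨hrr2, hrF⟩, hrc⟩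
  have hle := blobbedComps_le_card _ hcov
  rw [Finset.card_erase_of_mem hr2F] at hle
  have h0 : decoLines U = 0 := decoLines_ub hF.dec
  have hpos : 0 < F.card := Finset.card_pos.mpr ⟨r2, hr2F⟩
  have hdF : decoLines D = F.card := by unfold decoLines; rw [hF']
  unfold deltaExp at hd
  rw [h0, hdF] at hd
  omega

/-! #### Unfolding compatibility -/

lemma ofSB_ne_side {s s' : Bool} {b b' : TLNode n n} (h : s ≠ s') :
    ofSB (s, b) ≠ ofSB (s', b') :=
  fun e => h (congrArg Prod.fst (ofSB_inj e))

lemma ofSB_ne_snd {s s' : Bool} {b b' : TLNode n n} (h : b ≠ b') :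
    ofSB (s, b) ≠ ofSB (s', b') :=
  fun e => h (congrArg Prod.snd (ofSB_inj e))

section UFE

variable {D E : BlobDiagram n} (hn : 0 < n)

/-- The loop-free condition for the `e`-step at the level of unfolded pairings. -/
lemma hcap_e (hd0 : D.deco (Sum.inl ⟨0, hn⟩) = false) :
    uf D (ofSB (false, Sum.inl ⟨0, hn⟩)) ≠ ofSB (true, Sum.inl ⟨0, hn⟩) := by
  rw [uf_ofSB_undeco D false hd0]
  exact ofSB_ne_side (by simp)

lemma uf_E (hd0 : D.deco (Sum.inl ⟨0, hn⟩) = false)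
    (hEp : ∀ u, E.toTLDiagram.pair u = D.toTLDiagram.pair u)
    (hEd : ∀ u, E.deco u = true ↔
      (D.deco u = true ∨ u = Sum.inl ⟨0, hn⟩ ∨
        D.toTLDiagram.pair (Sum.inl ⟨0, hn⟩) = u)) :
    capU (ofSB (false, Sum.inl ⟨0, hn⟩)) (ofSB (true, Sum.inl ⟨0, hn⟩)) (uf D) = uf E := by
  set t0 : TLNode n n := Sum.inl ⟨0, hn⟩ with ht0
  set z0 : TLNode n n := D.toTLDiagram.pair t0 with hz0
  have hinvD := D.toTLDiagram.involutive
  have hffD := D.toTLDiagram.fixedFree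
  have hz0t0 : z0 ≠ t0 := hffD t0
  have hdz0 : D.deco z0 = false := by rw [hz0, D.deco_pair]; exact hd0
  have hEt0 : E.deco t0 = true := (hEd t0).mpr (Or.inr (Or.inl rfl))
  have hEz0 : E.deco z0 = true := (hEd z0).mpr (Or.inr (Or.inr rfl))
  have hpq : ofSB (false, t0) ≠ ofSB (true, t0) := ofSB_ne_side (by simp)
  have hcap := hcap_e hn hd0
  rw [← ht0] at hcap
  have hπP : uf D (ofSB (false, t0)) = ofSB (false, z0) := uf_ofSB_undeco D false hd0
  have hπQ : uf D (ofSB (true, t0)) = ofSB (true, z0) := uf_ofSB_undeco D true hd0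
  funext u
  rw [← ofSB_toSB u]
  obtain ⟨s, b⟩ := toSB u
  rcases eq_or_ne b t0 with rfl | hbt0
  · cases s
    · rw [capU_p, uf_ofSB_deco E false hEt0]; rfl
    · rw [capU_q hpq, uf_ofSB_deco E true hEt0]; rfl
  rcases eq_or_ne b z0 with rfl | hbz0
  · have hπu : uf D (ofSB (s, z0)) = ofSB (s, t0) := by
      rw [uf_ofSB_undeco D s hdz0, hz0, hinvD]
    have h1 : ofSB (s, z0) ≠ ofSB (false, t0) := ofSB_ne_snd hz0t0
    have h2 : ofSB (s, z0) ≠ ofSB (true, t0) := ofSB_ne_snd hz0t0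
    rw [uf_ofSB_deco E s hEz0]
    cases s
    · rw [capU_of_eq_p h1 h2 hπu, hπQ]; rfl
    · rw [capU_of_eq_q (uf_invol D) hpq hcap h2 hπu, hπP]; rfl
  · -- a line not touching the blob line of `e`
    have hEb : E.deco b = D.deco b := by
      rcases hdb : D.deco b with hf | ht
      · rw [← Bool.not_eq_true, hEd b]
        rintro (h | h | h)
        · rw [hdb] at h; exact Bool.false_ne_true h
        · exact hbt0 h
        · exact hbz0 h.symm
      · exact (hEd b).mpr (Or.inl hdb)
    have h1 : ofSB (s, b) ≠ ofSB (false, t0) := ofSB_ne_snd hbt0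
    have h2 : ofSB (s, b) ≠ ofSB (true, t0) := ofSB_ne_snd hbt0
    rcases hdb : D.deco b with hf | ht
    · have hπu : uf D (ofSB (s, b)) = ofSB (s, D.toTLDiagram.pair b) :=
        uf_ofSB_undeco D s hdb
      have h3 : D.toTLDiagram.pair b ≠ t0 := by
        intro e
        apply hbz0
        rw [hz0, ← e, hinvD]
      rw [capU_of_ne h1 h2 (by rw [hπu]; exact ofSB_ne_snd h3)
          (by rw [hπu]; exact ofSB_ne_snd h3), hπu,
        uf_ofSB_undeco E s (by rw [hEb]; exact hdb), hEp]
    · have hπu : uf D (ofSB (s, b)) = ofSB (!s, b) := uf_ofSB_deco D s hdb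
      rw [capU_of_ne h1 h2 (by rw [hπu]; exact ofSB_ne_snd hbt0)
          (by rw [hπu]; exact ofSB_ne_snd hbt0), hπu,
        uf_ofSB_deco E s (by rw [hEb]; exact hdb)]

end UFE

section UFU

variable {D E : BlobDiagram n} {a1 a2 : Fin n}

/-- Loop-free condition for the first cap of the `𝒰_i`-step. -/
lemma hcapR_u (hnp : D.toTLDiagram.pair (.inl a1) ≠ .inl a2) :
    uf D (ofSB (true, .inl a1)) ≠ ofSB (true, .inl a2) := by
  rcases hd1 : D.deco (.inl a1) with hf | ht
  · rw [uf_ofSB_undeco D true hd1]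
    exact ofSB_ne_snd hnp
  · rw [uf_ofSB_deco D true hd1]
    exact ofSB_ne_side (by simp)

/-- Loop-free condition for the second cap of the `𝒰_i`-step. -/
lemma hcapL_u (hne : a1 ≠ a2) (hnp : D.toTLDiagram.pair (.inl a1) ≠ .inl a2)
    (hnd : ¬(D.deco (.inl a1) = true ∧ D.deco (.inl a2) = true)) :
    capU (ofSB (true, .inl a1)) (ofSB (true, .inl a2)) (uf D) (ofSB (false, .inl a2)) ≠
      ofSB (false, .inl a1) := by
  have hqp : D.toTLDiagram.pair (.inl a2) ≠ .inl a1 :=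
    capU_qp D.toTLDiagram.involutive hnp
  have hL1R : (ofSB (false, (.inl a2 : TLNode n n))) ≠ ofSB (true, .inl a1) :=
    ofSB_ne_side (by simp)
  have hL1R2 : (ofSB (false, (.inl a2 : TLNode n n))) ≠ ofSB (true, .inl a2) :=
    ofSB_ne_side (by simp)
  rcases hd2 : D.deco (.inl a2) with hf | ht
  · have hπ : uf D (ofSB (false, .inl a2)) = ofSB (false, D.toTLDiagram.pair (.inl a2)) :=
      uf_ofSB_undeco D false hd2
    rw [capU_of_ne hL1R hL1R2 (by rw [hπ]; exact ofSB_ne_snd hqp)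
      (by rw [hπ]; exact ofSB_ne_side (by simp)), hπ]
    exact ofSB_ne_snd hqp
  · have hπ : uf D (ofSB (false, .inl a2)) = ofSB (true, .inl a2) :=
      uf_ofSB_deco D false hd2
    rw [capU_of_eq_q (uf_invol D) (ofSB_ne_snd (by simp [hne]))
      (hcapR_u hnp) hL1R2 hπ]
    have hd1 : D.deco (.inl a1) = false := by
      rcases hd1' : D.deco (.inl a1) with hf' | ht'
      · rfl
      · exact absurd ⟨hd1', hd2⟩ hnd
    rw [uf_ofSB_undeco D true hd1]
    exact ofSB_ne_side (by simp)

lemma uf_U (hne : a1 ≠ a2) (hnp : D.toTLDiagram.pair (.inl a1) ≠ .inl a2)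
    (hnd : ¬(D.deco (.inl a1) = true ∧ D.deco (.inl a2) = true))
    (hEp : ∀ u, E.toTLDiagram.pair u = capU (Sum.inl a1) (Sum.inl a2) D.toTLDiagram.pair u)
    (hEd1 : E.deco (Sum.inl a1) = false) (hEd2 : E.deco (Sum.inl a2) = false)
    (hEd : ∀ u, u ≠ Sum.inl a1 → u ≠ Sum.inl a2 →
      (E.deco u = true ↔ (D.deco u = true ∨
        (D.toTLDiagram.pair u = .inl a1 ∧ D.deco (.inl a2) = true) ∨
        (D.toTLDiagram.pair u = .inl a2 ∧ D.deco (.inl a1) = true)))) :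
    capU (ofSB (false, Sum.inl a2)) (ofSB (false, Sum.inl a1))
      (capU (ofSB (true, Sum.inl a1)) (ofSB (true, Sum.inl a2)) (uf D)) = uf E := by
  set t1 : TLNode n n := Sum.inl a1 with ht1
  set t2 : TLNode n n := Sum.inl a2 with ht2
  have hinvD := D.toTLDiagram.involutive
  have hffD := D.toTLDiagram.fixedFree
  have hbpq : t1 ≠ t2 := by simp [ht1, ht2, hne]
  have hqp : D.toTLDiagram.pair t2 ≠ t1 := capU_qp hinvD hnp
  set z1 : TLNode n n := D.toTLDiagram.pair t1 with hz1
  set z2 : TLNode n n := D.toTLDiagram.pair t2 with hz2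
  set R1 : TLNode (2 * n) (2 * n) := ofSB (true, t1) with hR1
  set R2 : TLNode (2 * n) (2 * n) := ofSB (true, t2) with hR2
  set L1 : TLNode (2 * n) (2 * n) := ofSB (false, t2) with hL1
  set L2 : TLNode (2 * n) (2 * n) := ofSB (false, t1) with hL2
  have hpqR : R1 ≠ R2 := ofSB_ne_snd hbpq
  have hpqL : L1 ≠ L2 := ofSB_ne_snd hbpq.symm
  have hinvπ := uf_invol D
  have hffπ := uf_ff D
  have hcapR : uf D R1 ≠ R2 := hcapR_u hnp
  set π₁ : TLNode (2 * n) (2 * n) → TLNode (2 * n) (2 * n) := capU R1 R2 (uf D) with hπ₁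
  have hinv₁ : Function.Involutive π₁ := capU_invol hinvπ hffπ hpqR hcapR
  have hcapL : π₁ L1 ≠ L2 := hcapL_u hne hnp hnd
  funext u
  rw [← ofSB_toSB u]
  obtain ⟨s, b⟩ := toSB u
  rcases eq_or_ne b t1 with rfl | hb1
  · -- the line at `a1`
    have hEpt1 : E.toTLDiagram.pair t1 = t2 := by rw [hEp]; exact capU_p
    rw [uf_ofSB_undeco E s hEd1, hEpt1]
    cases s
    · -- `u = L2`
      rw [show ofSB (false, t1) = L2 from rfl, capU_q hpqL, hL1]
    · -- `u = R1`
      have e1 : π₁ (ofSB (true, t1)) = R2 := capU_p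
      rw [capU_of_ne (ofSB_ne_side (by simp)) (ofSB_ne_side (by simp))
        (by rw [e1]; exact ofSB_ne_side (by simp)) (by rw [e1]; exact ofSB_ne_side (by simp)),
        e1, hR2]
  rcases eq_or_ne b t2 with rfl | hb2
  · -- the line at `a2`
    have hEpt2 : E.toTLDiagram.pair t2 = t1 := by rw [hEp]; exact capU_q hbpq
    rw [uf_ofSB_undeco E s hEd2, hEpt2]
    cases s
    · -- `u = L1`
      rw [show ofSB (false, t2) = L1 from rfl, capU_p, hL2]
    · -- `u = R2`
      have e1 : π₁ (ofSB (true, t2)) = R1 := capU_q hpqR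
      rw [capU_of_ne (ofSB_ne_side (by simp)) (ofSB_ne_side (by simp))
        (by rw [e1]; exact ofSB_ne_side (by simp)) (by rw [e1]; exact ofSB_ne_side (by simp)),
        e1, hR1]
  -- now `b` is not a capped node
  have hu1 : ofSB (s, b) ≠ L1 := ofSB_ne_snd hb2
  have hu2 : ofSB (s, b) ≠ L2 := ofSB_ne_snd hb1
  have hu3 : ofSB (s, b) ≠ R1 := ofSB_ne_snd hb1
  have hu4 : ofSB (s, b) ≠ R2 := ofSB_ne_snd hb2
  rcases hdb : D.deco b with hf | ht
  · -- `b`'s line of `D` is undecorated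
    have hπu : uf D (ofSB (s, b)) = ofSB (s, D.toTLDiagram.pair b) := uf_ofSB_undeco D s hdb
    rcases eq_or_ne (D.toTLDiagram.pair b) t1 with hpb | hp1
    · -- `D` pairs `b` with `a1`
      have hbz : D.toTLDiagram.pair t1 = b := by rw [← hpb, hinvD]
      have hd1 : D.deco t1 = false := by rw [← hpb, D.deco_pair, hdb]
      have hEpb : E.toTLDiagram.pair b = z2 := by
        rw [hEp]; rw [capU_of_eq_p hb1 hb2 hpb]
      rcases hd2 : D.deco t2 with hf2 | ht2'
      · -- fully undecorated: lines at `b,a1` and `a2` joined, no blob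
        have hEdb : E.deco b = false := by
          rw [← Bool.not_eq_true, hEd b hb1 hb2]
          rintro (h | ⟨_, h⟩ | ⟨h, _⟩)
          · rw [hdb] at h; exact Bool.false_ne_true h
          · rw [hd2] at h; exact Bool.false_ne_true h
          · rw [hpb] at h; exact hbpq h
        rw [uf_ofSB_undeco E s hEdb, hEpb]
        have hπL1 : π₁ L1 = ofSB (false, z2) := by
          have e0 : uf D L1 = ofSB (false, z2) := uf_ofSB_undeco D false hd2
          rw [hπ₁, capU_of_ne (ofSB_ne_side (by simp)) (ofSB_ne_side (by simp))
            (by rw [e0]; exact ofSB_ne_side (by simp))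
            (by rw [e0]; exact ofSB_ne_side (by simp)), e0]
        cases s
        · -- `π u = L2`
          have e1 : π₁ (ofSB (false, b)) = L2 := by
            rw [hπ₁, capU_of_ne (ofSB_ne_side (by simp)) (ofSB_ne_side (by simp))
              (by rw [hπu]; exact ofSB_ne_side (by simp))
              (by rw [hπu]; exact ofSB_ne_side (by simp)), hπu, hpb]
          rw [capU_of_eq_q hinv₁ hpqL hcapL hu2 e1, hπL1]
        · -- `π u = R1`
          have e1 : π₁ (ofSB (true, b)) = uf D R2 := by
            rw [hπ₁, capU_of_eq_p hu3 hu4 (by rw [hπu, hpb])]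
          have e2 : uf D R2 = ofSB (true, z2) := uf_ofSB_undeco D true hd2
          rw [capU_of_ne hu1 hu2 (by rw [e1, e2]; exact ofSB_ne_side (by simp))
            (by rw [e1, e2]; exact ofSB_ne_side (by simp)), e1, e2]
      · -- the line at `a2` is decorated: it merges across the mirror
        have hEdb : E.deco b = true := (hEd b hb1 hb2).mpr (Or.inr (Or.inl ⟨hpb, hd2⟩))
        rw [uf_ofSB_deco E s hEdb]
        cases s
        · -- `π u = L2`, connect through the decorated `a2`-line
          have e1 : π₁ (ofSB (false, b)) = L2 := by
            rw [hπ₁, capU_of_ne (ofSB_ne_side (by simp)) (ofSB_ne_side (by simp))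
              (by rw [hπu]; exact ofSB_ne_side (by simp))
              (by rw [hπu]; exact ofSB_ne_side (by simp)), hπu, hpb]
          have e2 : π₁ L1 = ofSB (true, b) := by
            have e0 : uf D L1 = R2 := uf_ofSB_deco D false hd2
            rw [hπ₁, capU_of_eq_q hinvπ hpqR hcapR (ofSB_ne_side (by simp)) e0,
              uf_ofSB_undeco D true hd1, hbz]
          rw [capU_of_eq_q hinv₁ hpqL hcapL hu2 e1, e2]
          rfl
        · -- `π u = R1`
          have e1 : π₁ (ofSB (true, b)) = L1 := by
            rw [hπ₁, capU_of_eq_p hu3 hu4 (by rw [hπu, hpb]), uf_ofSB_deco D true hd2]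
            rfl
          have e2 : π₁ L2 = ofSB (false, b) := by
            have e0 : uf D L2 = ofSB (false, z1) := uf_ofSB_undeco D false hd1
            rw [hπ₁, capU_of_ne (ofSB_ne_side (by simp)) (ofSB_ne_side (by simp))
              (by rw [e0]; exact ofSB_ne_side (by simp))
              (by rw [e0]; exact ofSB_ne_side (by simp)), e0, hz1, hbz]
          rw [capU_of_eq_p hu1 hu2 e1, e2]
          rfl
    rcases eq_or_ne (D.toTLDiagram.pair b) t2 with hpb | hp2
    · -- `D` pairs `b` with `a2`
      have hbz : D.toTLDiagram.pair t2 = b := by rw [← hpb, hinvD]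
      have hd2 : D.deco t2 = false := by rw [← hpb, D.deco_pair, hdb]
      have hEpb : E.toTLDiagram.pair b = z1 := by
        rw [hEp]; rw [capU_of_eq_q hinvD hbpq hnp hb2 hpb]
      rcases hd1 : D.deco t1 with hf1 | ht1'
      · have hEdb : E.deco b = false := by
          rw [← Bool.not_eq_true, hEd b hb1 hb2]
          rintro (h | ⟨h, _⟩ | ⟨_, h⟩)
          · rw [hdb] at h; exact Bool.false_ne_true h
          · rw [hpb] at h; exact hbpq h.symm
          · rw [hd1] at h; exact Bool.false_ne_true h
        rw [uf_ofSB_undeco E s hEdb, hEpb]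
        cases s
        · -- `π u = L1`
          have e1 : π₁ (ofSB (false, b)) = L1 := by
            rw [hπ₁, capU_of_ne (ofSB_ne_side (by simp)) (ofSB_ne_side (by simp))
              (by rw [hπu]; exact ofSB_ne_side (by simp))
              (by rw [hπu]; exact ofSB_ne_side (by simp)), hπu, hpb]
          have e2 : π₁ L2 = ofSB (false, z1) := by
            have e0 : uf D L2 = ofSB (false, z1) := uf_ofSB_undeco D false hd1
            rw [hπ₁, capU_of_ne (ofSB_ne_side (by simp)) (ofSB_ne_side (by simp))
              (by rw [e0]; exact ofSB_ne_side (by simp))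
              (by rw [e0]; exact ofSB_ne_side (by simp)), e0]
          rw [capU_of_eq_p hu1 hu2 e1, e2]
        · -- `π u = R2`
          have e1 : π₁ (ofSB (true, b)) = uf D R1 := by
            rw [hπ₁, capU_of_eq_q hinvπ hpqR hcapR hu4 (by rw [hπu, hpb])]
          have e2 : uf D R1 = ofSB (true, z1) := uf_ofSB_undeco D true hd1
          rw [capU_of_ne hu1 hu2 (by rw [e1, e2]; exact ofSB_ne_side (by simp))
            (by rw [e1, e2]; exact ofSB_ne_side (by simp)), e1, e2]
      · have hEdb : E.deco b = true := (hEd b hb1 hb2).mpr (Or.inr (Or.inr ⟨hpb, hd1⟩))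
        rw [uf_ofSB_deco E s hEdb]
        cases s
        · -- `π u = L1`
          have e1 : π₁ (ofSB (false, b)) = L1 := by
            rw [hπ₁, capU_of_ne (ofSB_ne_side (by simp)) (ofSB_ne_side (by simp))
              (by rw [hπu]; exact ofSB_ne_side (by simp))
              (by rw [hπu]; exact ofSB_ne_side (by simp)), hπu, hpb]
          have e2 : π₁ L2 = ofSB (true, b) := by
            have e0 : uf D L2 = R1 := uf_ofSB_deco D false hd1
            rw [hπ₁, capU_of_eq_p (ofSB_ne_side (by simp)) (ofSB_ne_side (by simp)) e0,
              uf_ofSB_undeco D true hd2, hbz]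
          rw [capU_of_eq_p hu1 hu2 e1, e2]
          rfl
        · -- `π u = R2`
          have e1 : π₁ (ofSB (true, b)) = L2 := by
            rw [hπ₁, capU_of_eq_q hinvπ hpqR hcapR hu4 (by rw [hπu, hpb]),
              uf_ofSB_deco D true hd1]
            rfl
          have e2 : π₁ L1 = ofSB (false, b) := by
            have e0 : uf D L1 = ofSB (false, z2) := uf_ofSB_undeco D false hd2
            rw [hπ₁, capU_of_ne (ofSB_ne_side (by simp)) (ofSB_ne_side (by simp))
              (by rw [e0]; exact ofSB_ne_side (by simp))
              (by rw [e0]; exact ofSB_ne_side (by simp)), e0, hz2, hbz]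
          rw [capU_of_eq_q hinv₁ hpqL hcapL hu2 e1, e2]
          rfl
    · -- a line untouched by the caps
      have hEdb : E.deco b = false := by
        rw [← Bool.not_eq_true, hEd b hb1 hb2]
        rintro (h | ⟨h, _⟩ | ⟨h, _⟩)
        · rw [hdb] at h; exact Bool.false_ne_true h
        · exact hp1 h
        · exact hp2 h
      have hEpb : E.toTLDiagram.pair b = D.toTLDiagram.pair b := by
        rw [hEp]; rw [capU_of_ne hb1 hb2 hp1 hp2]
      rw [uf_ofSB_undeco E s hEdb, hEpb]
      have e1 : π₁ (ofSB (s, b)) = ofSB (s, D.toTLDiagram.pair b) := by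
        rw [hπ₁, capU_of_ne (ofSB_ne_snd hb1) (ofSB_ne_snd hb2)
          (by rw [hπu]; exact ofSB_ne_snd hp1) (by rw [hπu]; exact ofSB_ne_snd hp2), hπu]
      rw [capU_of_ne (ofSB_ne_snd hb2) (ofSB_ne_snd hb1)
        (by rw [e1]; exact ofSB_ne_snd hp2) (by rw [e1]; exact ofSB_ne_snd hp1), e1]
  · -- `b`'s line is decorated: it bounces at the mirror, away from the caps
    have hEdb : E.deco b = true := (hEd b hb1 hb2).mpr (Or.inl hdb)
    have hπu : uf D (ofSB (s, b)) = ofSB (!s, b) := uf_ofSB_deco D s hdb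
    rw [uf_ofSB_deco E s hEdb]
    have e1 : π₁ (ofSB (s, b)) = ofSB (!s, b) := by
      rw [hπ₁, capU_of_ne (ofSB_ne_snd hb1) (ofSB_ne_snd hb2)
        (by rw [hπu]; exact ofSB_ne_snd hb1) (by rw [hπu]; exact ofSB_ne_snd hb2), hπu]
    rw [capU_of_ne (ofSB_ne_snd hb2) (ofSB_ne_snd hb1)
      (by rw [e1]; exact ofSB_ne_snd hb2) (by rw [e1]; exact ofSB_ne_snd hb1), e1]

end UFU

/-! #### Final assembly -/

lemma inl_eq_ofSB {v : ℕ} {h : v < 2 * n} {s : Bool} {j : Fin n}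
    (hv : v = cond s (n + (j : ℕ)) (n - 1 - (j : ℕ))) :
    (Sum.inl ⟨v, h⟩ : TLNode (2 * n) (2 * n)) = ofSB (s, Sum.inl j) := by
  show _ = Sum.inl (sidx s j)
  congr 1
  rw [Fin.ext_iff, sidx_val]
  exact hv

lemma Rword_cons {K : Type*} [CommRing K] (x : Kˣ) (m a : ℕ) (l : List ℕ) :
    Rword x m (a :: l) = RU x m a * Rword x m l := by
  simp [Rword]

theorem invariant_maskIs {K : Type*} [CommRing K] [IsDomain K] (x r s' t' : Kˣ) {n : ℕ}
    (ρ : BlobDiagram n → Matrix (Fin (2 * n) → Fin 2) (Fin (2 * n) → Fin 2) K)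
    (hmirE : ∀ E, IsEB E → MaskEquiv (ρ E) (RU r (2 * n) n))
    (hmirU : ∀ i : ℕ, 1 ≤ i → i + 1 ≤ n → ∃ X Y,
      (∀ U, IsUB i U → ρ U = X * Y) ∧
      MaskEquiv X (RU s' (2 * n) (n - i)) ∧ MaskEquiv Y (RU t' (2 * n) (n + i)))
    {w : List ℕ} {B : BlobDiagram n} (hw : EvalBlob w B) :
    ∀ gs, MatchesWord w gs →
      MaskIs ((gs.map ρ).prod) (uf B) ∧
      MaskIs (Rword x (2 * n) (fword n w)) (uf B) := by
  induction hw with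
  | nil E hE =>
    intro gs hgs
    cases hgs
    constructor
    · simpa using maskIs_one hE
    · simpa [Rword, fword] using maskIs_one hE
  | consE L Bg Dd Ee hev hBe hcomp hzp hzb hde ih =>
    intro gs hgs
    cases hgs with
    | cons hrel hgs' =>
      rename_i d gs'
      have hEB : IsEB d := by
        rcases hrel with ⟨_, h⟩ | ⟨h, _⟩
        · exact h
        · omega
      obtain ⟨ihρ, ihR⟩ := ih gs' hgs'
      have hn : 0 < n := hBe.2.choose
      have hd0 : Dd.deco (Sum.inl ⟨0, hn⟩) = false := deco0_of_deltaExp_e hBe hn hde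
      obtain ⟨hEpair, hEdeco⟩ := composite_e hBe hcomp hn
      have hufE := uf_E hn hd0 hEpair hEdeco
      have eqP : (Sum.inl (⟨n - 1, by omega⟩ : Fin (2 * n)) : TLNode (2 * n) (2 * n)) =
          ofSB (false, Sum.inl ⟨0, hn⟩) := inl_eq_ofSB (by simp)
      have eqQ : (Sum.inl (⟨n, by omega⟩ : Fin (2 * n)) : TLNode (2 * n) (2 * n)) =
          ofSB (true, Sum.inl ⟨0, hn⟩) := inl_eq_ofSB (by simp)
      have hpq : (⟨n - 1, by omega⟩ : Fin (2 * n)) ≠ ⟨n, by omega⟩ := by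
        simp only [ne_eq, Fin.mk.injEq]; omega
      have hcap : uf Dd (Sum.inl ⟨n - 1, by omega⟩) ≠ Sum.inl ⟨n, by omega⟩ := by
        rw [eqP, eqQ]; exact hcap_e hn hd0
      constructor
      · have hG : MaskIs (ρ d) (genP (⟨n - 1, by omega⟩ : Fin (2 * n)) ⟨n, by omega⟩) :=
          maskIs_of_maskEquiv (hmirE d hEB) (maskIs_RU r (by omega) (by omega))
        have hstep := mask_mul (uf Dd) (uf_invol Dd) (uf_ff Dd) _ _ hpq hcap
          (ρ d) _ hG ihρ
        rw [eqP, eqQ, hufE] at hstep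
        simpa using hstep
      · have hfw : fword n (0 :: L) = n :: fword n L := by simp [fword]
        have hG : MaskIs (RU x (2 * n) n) (genP (⟨n - 1, by omega⟩ : Fin (2 * n)) ⟨n, by omega⟩) :=
          maskIs_RU x (by omega) (by omega)
        have hstep := mask_mul (uf Dd) (uf_invol Dd) (uf_ff Dd) _ _ hpq hcap
          (RU x (2 * n) n) _ hG ihR
        rw [eqP, eqQ, hufE] at hstep
        rw [hfw, Rword_cons]
        exact hstep
  | consU i L Ug Dd Ee hev hi1 hUB hcomp hzp hzb hde ih =>
    intro gs hgs
    cases hgs with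
    | cons hrel hgs' =>
      rename_i d gs'
      have hUBd : IsUB i d := by
        rcases hrel with ⟨h, _⟩ | ⟨_, h⟩
        · omega
        · exact h
      obtain ⟨ihρ, ihR⟩ := ih gs' hgs'
      obtain ⟨⟨_, h2, hU1, hU2, hU3⟩, hUd⟩ := hUB
      have hn2 : 2 ≤ n := by omega
      set a1 : Fin n := ⟨i - 1, by omega⟩ with ha1
      set a2 : Fin n := ⟨i, h2⟩ with ha2
      have hF : UFacts Ug a1 a2 := by
        refine ⟨?_, hU1, hU2, ?_, hUd⟩
        · simp only [ha1, ha2, ne_eq, Fin.mk.injEq]; omega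
        · intro k hk1 hk2
          refine hU3 k ?_ ?_
          · intro hv; exact hk1 (Fin.ext (by rw [hv]))
          · intro hv; exact hk2 (Fin.ext (by rw [hv]))
      have hnp : Dd.toTLDiagram.pair (.inl a1) ≠ .inl a2 := pair_ne_of_zeta hF hzp hzb
      have hnd : ¬(Dd.deco (.inl a1) = true ∧ Dd.deco (.inl a2) = true) :=
        not_both_deco hF hnp hde
      obtain ⟨hEp, hEd1, hEd2, hEd⟩ := composite_u hF hcomp hnp
      have hufU := uf_U hF.ne hnp hnd hEp hEd1 hEd2 hEd
      obtain ⟨X, Y, hXY, hXm, hYm⟩ := hmirU i hi1 (by omega)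
      -- the four capped nodes
      have eqR1 : (Sum.inl (⟨n + i - 1, by omega⟩ : Fin (2 * n)) : TLNode (2 * n) (2 * n)) =
          ofSB (true, Sum.inl a1) := inl_eq_ofSB (by simp [ha1]; omega)
      have eqR2 : (Sum.inl (⟨n + i, by omega⟩ : Fin (2 * n)) : TLNode (2 * n) (2 * n)) =
          ofSB (true, Sum.inl a2) := inl_eq_ofSB (by simp [ha2])
      have eqL1 : (Sum.inl (⟨n - i - 1, by omega⟩ : Fin (2 * n)) : TLNode (2 * n) (2 * n)) =
          ofSB (false, Sum.inl a2) := inl_eq_ofSB (by simp [ha2]; omega)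
      have eqL2 : (Sum.inl (⟨n - i, by omega⟩ : Fin (2 * n)) : TLNode (2 * n) (2 * n)) =
          ofSB (false, Sum.inl a1) := inl_eq_ofSB (by simp [ha1]; omega)
      have hpqR : (⟨n + i - 1, by omega⟩ : Fin (2 * n)) ≠ ⟨n + i, by omega⟩ := by
        simp only [ne_eq, Fin.mk.injEq]; omega
      have hpqL : (⟨n - i - 1, by omega⟩ : Fin (2 * n)) ≠ ⟨n - i, by omega⟩ := by
        simp only [ne_eq, Fin.mk.injEq]; omega
      have hcapR : uf Dd (Sum.inl ⟨n + i - 1, by omega⟩) ≠ Sum.inl ⟨n + i, by omega⟩ := by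
        rw [eqR1, eqR2]; exact hcapR_u hnp
      -- first multiplication
      have hstep1ρ := mask_mul (uf Dd) (uf_invol Dd) (uf_ff Dd) _ _ hpqR hcapR
        Y _ (maskIs_of_maskEquiv hYm (maskIs_RU t' (by omega) (by omega))) ihρ
      have hstep1R := mask_mul (uf Dd) (uf_invol Dd) (uf_ff Dd) _ _ hpqR hcapR
        (RU x (2 * n) (n + i)) _ (maskIs_RU x (by omega) (by omega)) ihR
      rw [eqR1, eqR2] at hstep1ρ hstep1R
      -- properties of the intermediate pairing
      have hinv1 : Function.Involutive
          (capU (ofSB (true, Sum.inl a1)) (ofSB (true, Sum.inl a2)) (uf Dd)) :=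
        capU_invol (uf_invol Dd) (uf_ff Dd) (ofSB_ne_snd (by simp [ha1, ha2, Fin.ext_iff]; omega))
          (by rw [← eqR1, ← eqR2]; exact hcapR)
      have hff1 : ∀ u, capU (ofSB (true, Sum.inl a1)) (ofSB (true, Sum.inl a2)) (uf Dd) u ≠ u :=
        capU_ff (uf_invol Dd) (uf_ff Dd) (ofSB_ne_snd (by simp [ha1, ha2, Fin.ext_iff]; omega))
          (by rw [← eqR1, ← eqR2]; exact hcapR)
      have hcapL : capU (ofSB (true, Sum.inl a1)) (ofSB (true, Sum.inl a2)) (uf Dd)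
          (Sum.inl ⟨n - i - 1, by omega⟩) ≠ Sum.inl ⟨n - i, by omega⟩ := by
        rw [eqL1, eqL2]; exact hcapL_u hF.ne hnp hnd
      -- second multiplication
      have hstep2ρ := mask_mul _ hinv1 hff1 _ _ hpqL hcapL
        X _ (maskIs_of_maskEquiv hXm (maskIs_RU s' (by omega) (by omega))) hstep1ρ
      have hstep2R := mask_mul _ hinv1 hff1 _ _ hpqL hcapL
        (RU x (2 * n) (n - i)) _ (maskIs_RU x (by omega) (by omega)) hstep1R
      rw [eqL1, eqL2, hufU] at hstep2ρ hstep2R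
      constructor
      · have : ((d :: gs').map ρ).prod = X * (Y * (gs'.map ρ).prod) := by
          rw [List.map_cons, List.prod_cons, hXY d hUBd, Matrix.mul_assoc]
        rw [this]
        exact hstep2ρ
      · have hfw : fword n (i :: L) = (n - i) :: (n + i) :: fword n L := by
          simp only [fword, List.flatMap_cons]
          rw [if_neg (by omega : ¬ i = 0)]
          rfl
        rw [hfw, Rword_cons, Rword_cons]
        exact hstep2R

end St14Aux

/-- Let `ρ` be a mirror representation of `b_n` on `(K²)^{⊗2n}`
and let `w` be a loop-free word in the generators `{e, 𝒰_1, …, 𝒰_{n-1}}` of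
`b_n`.  Then the matrix `ρ(w)` (the product of the images of the letters of `w`)
is mask equivalent to `R(f(w))`. -/
theorem statement14 {K : Type*} [CommRing K] [IsDomain K] (x : Kˣ) (γ δe : K) {n : ℕ}
    (ρ : BlobDiagram n → Matrix (Fin (2 * n) → Fin 2) (Fin (2 * n) → Fin 2) K)
    (hrep : IsBlobRep x γ δe ρ) (hmir : IsMirror ρ)
    (w : List ℕ) (B : BlobDiagram n) (hw : EvalBlob w B)
    (gs : List (BlobDiagram n)) (hgs : MatchesWord w gs) :
    MaskEquiv ((gs.map ρ).prod) (Rword x (2 * n) (fword n w)) := by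
  obtain ⟨r, s', t', hmirE, hmirU⟩ := hmir
  obtain ⟨h1, h2⟩ := invariant_maskIs x r s' t' ρ hmirE hmirU hw gs hgs
  exact maskEquiv_of_maskIs h1 h2

end TLBlob
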